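/- arXiv:1406.0707 — 7 statements merged into one kernel-verified Lean document; each statement's English description precedes it below -/
import Mathlib

section
/- Discrete fundamental lemma of the calculus of variations (first order, h = 1): Let a < b be integers with b − a ≥ 2, and let f₀, f₁ : ℤ → ℝ. Suppose that for every η : ℤ → ℝ with η(a) = 0 and η(b) = 0 we have ∑_{t=a}^{b-1} ( f₀(t)·η(t+1) + f₁(t)·Δη(t) ) = 0, where Δη(t) = η(t+1) − η(t). Then f₀(t) − Δf₁(t) = 0 for all integers t with a ≤ t ≤ b − 2. -/
theorem discrete_fundamental_lemma (a b : ℤ) (hab : a + 2 ≤ b) (f0 f1 : ℤ → ℝ)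
    (hyp : ∀ η : ℤ → ℝ, η a = 0 → η b = 0 →
      ∑ t ∈ Finset.Ico a b, (f0 t * η (t + 1) + f1 t * (η (t + 1) - η t)) = 0) :
    ∀ t : ℤ, a ≤ t → t ≤ b - 2 → f0 t - (f1 (t + 1) - f1 t) = 0 := by
  intro t hat htb
  set η : ℤ → ℝ := fun x => if x = t + 1 then 1 else 0 with hη
  have hηa : η a = 0 := by simp only [hη]; rw [if_neg]; omega
  have hηb : η b = 0 := by simp only [hη]; rw [if_neg]; omega
  have key := hyp η hηa hηb
  have hrw : ∀ u ∈ Finset.Ico a b,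
      f0 u * η (u + 1) + f1 u * (η (u + 1) - η u)
        = (if u = t then f0 t + f1 t else 0) + (if u = t + 1 then -f1 (t + 1) else 0) := by
    intro u _
    simp only [hη]
    by_cases h1 : u = t
    · subst h1
      rw [if_pos rfl, if_pos rfl, if_neg (by omega), if_neg (by omega)]
      ring
    · rw [if_neg (by omega), if_neg h1]
      by_cases h2 : u = t + 1
      · subst h2
        rw [if_pos rfl, if_pos rfl]
        ring
      · rw [if_neg h2, if_neg h2]
        ring
  rw [Finset.sum_congr rfl hrw, Finset.sum_add_distrib,
    Finset.sum_ite_eq' _ t, Finset.sum_ite_eq' _ (t + 1),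
    if_pos (by rw [Finset.mem_Ico]; omega), if_pos (by rw [Finset.mem_Ico]; omega)] at key
  linarith
end

section
/- Discrete Euler–Lagrange equation (ℤ, scalar case): Let a < b be integers with b − a ≥ 2, L : ℤ × ℝ × ℝ → ℝ with L(t, ·, ·) continuously differentiable for each t, and α, β ∈ ℝ. If y* : ℤ → ℝ with y*(a) = α, y*(b) = β is a local minimizer of ℒ[y] = ∑_{t=a}^{b-1} L(t, y(t+1), Δy(t)) over all y with y(a) = α, y(b) = β (local with respect to the sup-norm of y and Δy on [a,b]), then Δ[∂L/∂v (t, y*(t+1), Δy*(t))] = ∂L/∂u (t, y*(t+1), Δy*(t)) for all integers t with a ≤ t ≤ b − 2, where ∂L/∂u and ∂L/∂v denote partial derivatives in the second and third arguments and Δ is the forward difference in t. -/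
theorem discrete_euler_lagrange (a b : ℤ) (hab : a + 2 ≤ b)
    (L : ℤ → ℝ → ℝ → ℝ)
    (hL : ∀ t : ℤ, ContDiff ℝ 1 (fun p : ℝ × ℝ => L t p.1 p.2))
    (α β : ℝ) (ystar : ℤ → ℝ) (hya : ystar a = α) (hyb : ystar b = β)
    (hmin : ∃ δ : ℝ, 0 < δ ∧ ∀ y : ℤ → ℝ, y a = α → y b = β →
      (∀ t ∈ Finset.Ico a b,
        |y (t + 1) - ystar (t + 1)| +
          |(y (t + 1) - y t) - (ystar (t + 1) - ystar t)| < δ) →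
      ∑ t ∈ Finset.Ico a b, L t (ystar (t + 1)) (ystar (t + 1) - ystar t) ≤
        ∑ t ∈ Finset.Ico a b, L t (y (t + 1)) (y (t + 1) - y t)) :
    ∀ t : ℤ, a ≤ t → t ≤ b - 2 →
      deriv (fun v => L (t + 1) (ystar (t + 2)) v) (ystar (t + 2) - ystar (t + 1)) -
        deriv (fun v => L t (ystar (t + 1)) v) (ystar (t + 1) - ystar t) =
      deriv (fun u => L t u (ystar (t + 1) - ystar t)) (ystar (t + 1)) := by
  obtain ⟨δ, hδ, hmin⟩ := hmin
  intro t hat htb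
  set u0 : ℝ := ystar (t + 1) with hu0
  set v0 : ℝ := ystar (t + 1) - ystar t with hv0
  set u1 : ℝ := ystar (t + 2) with hu1
  set w0 : ℝ := ystar (t + 2) - ystar (t + 1) with hw0
  set g : ℝ → ℝ := fun ε => L t (u0 + ε) (v0 + ε) + L (t + 1) u1 (w0 - ε) with hgdef
  -- g has a local minimum at 0
  have hlocmin : IsLocalMin g 0 := by
    rw [IsLocalMin, IsMinFilter, Metric.eventually_nhds_iff]
    refine ⟨δ / 2, by linarith, fun ε hε => ?_⟩
    rw [dist_zero_right, Real.norm_eq_abs] at hε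
    set y : ℤ → ℝ := fun s => ystar s + if s = t + 1 then ε else 0 with hy
    have hya' : y a = α := by
      have : a ≠ t + 1 := by omega
      simp [hy, this, hya]
    have hyb' : y b = β := by
      have : b ≠ t + 1 := by omega
      simp [hy, this, hyb]
    have hclose : ∀ s ∈ Finset.Ico a b,
        |y (s + 1) - ystar (s + 1)| +
          |(y (s + 1) - y s) - (ystar (s + 1) - ystar s)| < δ := by
      intro s _
      have h1 : |y (s + 1) - ystar (s + 1)| ≤ |ε| := by
        simp only [hy]
        split_ifs <;> simp [abs_nonneg]
      have h2 : |(y (s + 1) - y s) - (ystar (s + 1) - ystar s)| ≤ |ε| := by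
        simp only [hy]
        have hne : ¬(s + 1 = t + 1 ∧ s = t + 1) := by omega
        split_ifs with hc1 hc2 hc2
        · exact absurd ⟨hc1, hc2⟩ hne
        · have : ystar (s + 1) + ε - ystar s - (ystar (s + 1) - ystar s) = ε := by ring
          rw [show ystar (s + 1) + ε - (ystar s + 0) - (ystar (s + 1) - ystar s) = ε by ring]
        · rw [show ystar (s + 1) + 0 - (ystar s + ε) - (ystar (s + 1) - ystar s) = -ε by ring,
            abs_neg]
        · simp [abs_nonneg]
      linarith
    have hmt : t ∈ Finset.Ico a b := by simp [Finset.mem_Ico]; omega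
    have hmt1 : t + 1 ∈ Finset.Ico a b := by simp [Finset.mem_Ico]; omega
    have hsub : ({t, t + 1} : Finset ℤ) ⊆ Finset.Ico a b := by
      intro s hs
      simp only [Finset.mem_insert, Finset.mem_singleton] at hs
      rcases hs with h | h <;> simp [Finset.mem_Ico] <;> omega
    have hdiff : ∑ s ∈ Finset.Ico a b,
        (L s (y (s + 1)) (y (s + 1) - y s) - L s (ystar (s + 1)) (ystar (s + 1) - ystar s))
        = g ε - g 0 := by
      rw [← Finset.sum_subset hsub ?_]
      · rw [Finset.sum_pair (by omega : t ≠ t + 1)]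
        have e1 : y (t + 1) = ystar (t + 1) + ε := by simp [hy]
        have e2 : y t = ystar t := by
          have : t ≠ t + 1 := by omega
          simp [hy, this]
        have e3 : y (t + 1 + 1) = ystar (t + 2) := by
          have h1 : t + 1 + 1 ≠ t + 1 := by omega
          have h2 : t + 1 + 1 = t + 2 := by ring
          simp [hy, h1, h2]
        have e4 : ystar (t + 1 + 1) = ystar (t + 2) := by norm_num [show t + 1 + 1 = t + 2 by ring]
        rw [e1, e2, e3, e4]
        simp only [hgdef, hu0, hv0, hu1, hw0]
        ring_nf
      · intro s _ hns
        simp only [Finset.mem_insert, Finset.mem_singleton, not_or] at hns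
        obtain ⟨hn1, hn2⟩ := hns
        have e5 : y (s + 1) = ystar (s + 1) := by
          have : s + 1 ≠ t + 1 := by omega
          simp [hy, this]
        have e6 : y s = ystar s := by simp [hy, hn2]
        rw [e5, e6, sub_self]
    have := hmin y hya' hyb' hclose
    have hsum : ∑ s ∈ Finset.Ico a b, L s (y (s + 1)) (y (s + 1) - y s)
        = ∑ s ∈ Finset.Ico a b, L s (ystar (s + 1)) (ystar (s + 1) - ystar s) + (g ε - g 0) := by
      rw [← hdiff, Finset.sum_sub_distrib]
      ring
    rw [hsum] at this
    linarith
  -- derivatives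
  set f' := fderiv ℝ (fun p : ℝ × ℝ => L t p.1 p.2) (u0, v0) with hf'
  set q' := fderiv ℝ (fun p : ℝ × ℝ => L (t + 1) p.1 p.2) (u1, w0) with hq'
  have hF : HasFDerivAt (fun p : ℝ × ℝ => L t p.1 p.2) f' (u0, v0) :=
    (((hL t).differentiable one_ne_zero) (u0, v0)).hasFDerivAt
  have hQ : HasFDerivAt (fun p : ℝ × ℝ => L (t + 1) p.1 p.2) q' (u1, w0) :=
    (((hL (t + 1)).differentiable one_ne_zero) (u1, w0)).hasFDerivAt
  -- derivative of g at 0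
  have hinner1 : HasDerivAt (fun ε : ℝ => ((u0 + ε, v0 + ε) : ℝ × ℝ)) (1, 1) 0 :=
    HasDerivAt.prodMk ((hasDerivAt_id 0).const_add u0) ((hasDerivAt_id 0).const_add v0)
  have h1 : HasDerivAt (fun ε : ℝ => L t (u0 + ε) (v0 + ε)) (f' (1, 1)) 0 := by
    have hF0 : HasFDerivAt (fun p : ℝ × ℝ => L t p.1 p.2) f' (u0 + 0, v0 + 0) := by
      simpa using hF
    have := hF0.comp_hasDerivAt (x := (0 : ℝ)) hinner1
    exact this
  have hinner2 : HasDerivAt (fun ε : ℝ => ((u1, w0 - ε) : ℝ × ℝ)) (0, -1) 0 := by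
    exact HasDerivAt.prodMk (hasDerivAt_const 0 u1) ((hasDerivAt_id 0).const_sub w0 |>.congr_deriv rfl)
  have h2 : HasDerivAt (fun ε : ℝ => L (t + 1) u1 (w0 - ε)) (q' (0, -1)) 0 := by
    have hQ0 : HasFDerivAt (fun p : ℝ × ℝ => L (t + 1) p.1 p.2) q' (u1, w0 - 0) := by
      simpa using hQ
    have := hQ0.comp_hasDerivAt (x := (0 : ℝ)) hinner2
    exact this
  have hg' : HasDerivAt g (f' (1, 1) + q' (0, -1)) 0 := h1.add h2
  have hzero : f' (1, 1) + q' (0, -1) = 0 := by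
    have := hlocmin.hasDerivAt_eq_zero hg'
    exact this
  -- partial derivatives
  have hpu : HasDerivAt (fun u => L t u v0) (f' (1, 0)) u0 := by
    have hi : HasDerivAt (fun u : ℝ => ((u, v0) : ℝ × ℝ)) (1, 0) u0 :=
      HasDerivAt.prodMk (hasDerivAt_id u0) (hasDerivAt_const u0 v0)
    have := hF.comp_hasDerivAt (x := u0) hi
    exact this
  have hpv : HasDerivAt (fun v => L t u0 v) (f' (0, 1)) v0 := by
    have hi : HasDerivAt (fun v : ℝ => ((u0, v) : ℝ × ℝ)) (0, 1) v0 :=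
      HasDerivAt.prodMk (hasDerivAt_const v0 u0) (hasDerivAt_id v0)
    have := hF.comp_hasDerivAt (x := v0) hi
    exact this
  have hqv : HasDerivAt (fun v => L (t + 1) u1 v) (q' (0, 1)) w0 := by
    have hi : HasDerivAt (fun v : ℝ => ((u1, v) : ℝ × ℝ)) (0, 1) w0 :=
      HasDerivAt.prodMk (hasDerivAt_const w0 u1) (hasDerivAt_id w0)
    have := hQ.comp_hasDerivAt (x := w0) hi
    exact this
  have hsplit : f' (1, 1) = f' (1, 0) + f' (0, 1) := by
    rw [← map_add]; norm_num
  have hneg : q' (0, -1) = -q' (0, 1) := by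
    rw [← map_neg]; norm_num
  rw [hqv.deriv, hpv.deriv, hpu.deriv]
  rw [hsplit, hneg] at hzero
  linarith
end

section
/- Classical second Noether theorem (simplest case: n = 1, r = 1, m = 0, no time transformation): Let L : ℝ × ℝ × ℝ → ℝ be C², g : [a,b] → ℝ be C¹, and suppose that for every C¹ function y : [a,b] → ℝ and every C¹ function p : [a,b] → ℝ, ∫_a^b L(t, y(t) + g(t)p(t), y'(t) + (g·p)'(t)) dt = ∫_a^b L(t, y(t), y'(t)) dt. Then for every C² function y, the identity g(t)·( ∂L/∂u(t,y(t),y'(t)) − d/dt ∂L/∂v(t,y(t),y'(t)) ) = 0 holds for all t ∈ [a,b]. -/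
open MeasureTheory Set Metric


theorem classical_second_noether_m0 (a b : ℝ) (hab : a < b)
    (L : ℝ → ℝ → ℝ → ℝ)
    (hL : ContDiff ℝ 2 (fun p : ℝ × ℝ × ℝ => L p.1 p.2.1 p.2.2))
    (g : ℝ → ℝ) (hg : ContDiff ℝ 1 g)
    (hinv : ∀ y p : ℝ → ℝ, ContDiff ℝ 1 y → ContDiff ℝ 1 p →
      ∫ t in a..b, L t (y t + g t * p t)
          (deriv y t + deriv (fun s => g s * p s) t) =
        ∫ t in a..b, L t (y t) (deriv y t)) :
    ∀ y : ℝ → ℝ, ContDiff ℝ 2 y → ∀ t ∈ Set.Icc a b,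
      g t * (deriv (fun u => L t u (deriv y t)) (y t) -
        deriv (fun s => deriv (fun v => L s (y s) v) (deriv y s)) t) = 0 := by
  intro y hy
  have h12 : (1 : WithTop ℕ∞) ≤ 2 := by norm_num
  set f : ℝ × ℝ × ℝ → ℝ := fun p => L p.1 p.2.1 p.2.2 with hfdef
  have hy1 : ContDiff ℝ 1 y := hy.of_le h12
  have hdy : Differentiable ℝ y := hy1.differentiable one_ne_zero
  have hy' : ContDiff ℝ 1 (deriv y) := by
    have h2 : ContDiff ℝ (1 + 1) y := by
      have : ((1:WithTop ℕ∞) + 1) = 2 := by norm_num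
      rw [this]; exact hy
    exact (contDiff_succ_iff_deriv.mp h2).2.2
  have hfd1 : ContDiff ℝ 1 (fderiv ℝ f) := hL.fderiv_right (by norm_num)
  have hDf : Continuous (fderiv ℝ f) := hL.continuous_fderiv (by norm_num)
  set Lu : ℝ × ℝ × ℝ → ℝ := fun z => fderiv ℝ f z (0, 1, 0) with hLudef
  set Lv : ℝ × ℝ × ℝ → ℝ := fun z => fderiv ℝ f z (0, 0, 1) with hLvdef
  have hLucont : Continuous Lu := hDf.clm_apply continuous_const
  have hLv1 : ContDiff ℝ 1 Lv := hfd1.clm_apply contDiff_const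
  set c : ℝ → ℝ × ℝ × ℝ := fun s => (s, y s, deriv y s) with hcdef
  have hc : ContDiff ℝ 1 c := contDiff_id.prodMk (hy1.prodMk hy')
  have hdf : ∀ z, HasFDerivAt f (fderiv ℝ f z) z :=
    fun z => ((hL.differentiable (by norm_num)) z).hasFDerivAt
  have hDlin : ∀ (z : ℝ × ℝ × ℝ) (α β : ℝ),
      fderiv ℝ f z (0, α, β) = α * Lu z + β * Lv z := by
    intro z α β
    have h : ((0:ℝ), α, β) = α • ((0:ℝ), (1:ℝ), (0:ℝ)) + β • ((0:ℝ), (0:ℝ), (1:ℝ)) := by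
      simp [Prod.ext_iff]
    rw [h, map_add, ContinuousLinearMap.map_smul, ContinuousLinearMap.map_smul, smul_eq_mul, smul_eq_mul]
  have hasD_u : ∀ t u v : ℝ, HasDerivAt (fun u' => L t u' v) (Lu (t, u, v)) u := by
    intro t u v
    have hcurve : HasDerivAt (fun u' : ℝ => ((t, u', v) : ℝ × ℝ × ℝ))
        (((0:ℝ), (1:ℝ), (0:ℝ))) u :=
      (hasDerivAt_const u t).prodMk ((hasDerivAt_id u).prodMk (hasDerivAt_const u v))
    exact (hdf (t, u, v)).comp_hasDerivAt u hcurve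
  have hasD_v : ∀ t u v : ℝ, HasDerivAt (fun v' => L t u v') (Lv (t, u, v)) v := by
    intro t u v
    have hcurve : HasDerivAt (fun v' : ℝ => ((t, u, v') : ℝ × ℝ × ℝ))
        (((0:ℝ), (0:ℝ), (1:ℝ))) v :=
      (hasDerivAt_const v t).prodMk ((hasDerivAt_const v u).prodMk (hasDerivAt_id v))
    exact (hdf (t, u, v)).comp_hasDerivAt v hcurve
  set Λ : ℝ → ℝ := fun s => Lv (c s) with hΛdef
  have hΛ : ContDiff ℝ 1 Λ := hLv1.comp hc
  have hΛd : Differentiable ℝ Λ := hΛ.differentiable one_ne_zero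
  have hΛ'cont : Continuous (deriv Λ) := hΛ.continuous_deriv le_rfl
  have hLu_eq : ∀ t, deriv (fun u => L t u (deriv y t)) (y t) = Lu (c t) :=
    fun t => (hasD_u t (y t) (deriv y t)).deriv
  have hΛ_eq : (fun s => deriv (fun v => L s (y s) v) (deriv y s)) = Λ :=
    funext fun s => (hasD_v s (y s) (deriv y s)).deriv
  set ρ : ℝ → ℝ := fun t => g t * (Lu (c t) - deriv Λ t) with hρdef
  have hρcont : Continuous ρ :=
    hg.continuous.mul ((hLucont.comp hc.continuous).sub hΛ'cont)

  have hyc : Continuous y := hy1.continuous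
  have hy'c : Continuous (deriv y) := hy'.continuous
  have hkey : ∀ p : ℝ → ℝ, ContDiff ℝ 1 p → p a = 0 → p b = 0 →
      (∫ t in a..b, ρ t * p t) = 0 := by
    intro p hp hpa hpb
    set q : ℝ → ℝ := fun s => g s * p s with hqdef
    have hq : ContDiff ℝ 1 q := hg.mul hp
    have hqd : Differentiable ℝ q := hq.differentiable one_ne_zero
    have hqc : Continuous q := hq.continuous
    have hq'c : Continuous (deriv q) := hq.continuous_deriv le_rfl
    have hqa : q a = 0 := by simp [hqdef, hpa]
    have hqb : q b = 0 := by simp [hqdef, hpb]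
    set γ : ℝ × ℝ → ℝ × ℝ × ℝ :=
      fun w => (w.2, y w.2 + w.1 * q w.2, deriv y w.2 + w.1 * deriv q w.2) with hγdef
    have hγc : Continuous γ := by
      refine continuous_snd.prodMk (Continuous.prodMk ?_ ?_)
      · exact (hyc.comp continuous_snd).add
          (continuous_fst.mul (hqc.comp continuous_snd))
      · exact (hy'c.comp continuous_snd).add
          (continuous_fst.mul (hq'c.comp continuous_snd))
    set Φ : ℝ × ℝ → ℝ := fun w => fderiv ℝ f (γ w) (0, q w.2, deriv q w.2) with hΦdef
    have hΦc : Continuous Φ :=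
      (hDf.comp hγc).clm_apply (continuous_const.prodMk
        ((hqc.comp continuous_snd).prodMk (hq'c.comp continuous_snd)))
    set F : ℝ → ℝ → ℝ := fun ε t => f (γ (ε, t)) with hFdef
    have hFc : ∀ x : ℝ, Continuous (F x) :=
      fun x => hL.continuous.comp (hγc.comp (continuous_const.prodMk continuous_id))
    have h_diff : ∀ (t : ℝ) (x : ℝ), HasDerivAt (fun ε => F ε t) (Φ (x, t)) x := by
      intro t x
      exact (hdf (γ (x, t))).comp_hasDerivAt x
        ((hasDerivAt_const x t).prodMk
          (((hasDerivAt_mul_const (q t)).const_add (y t)).prodMk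
            ((hasDerivAt_mul_const (deriv q t)).const_add (deriv y t))))
    obtain ⟨C, hC⟩ := ((isCompact_Icc (a := (-1:ℝ)) (b := 1)).prod
      (isCompact_uIcc (a := a) (b := b))).exists_bound_of_continuousOn hΦc.continuousOn
    have hder := intervalIntegral.hasDerivAt_integral_of_dominated_loc_of_deriv_le
      (F := F) (F' := fun x t => Φ (x, t)) (x₀ := (0:ℝ)) (bound := fun _ => C)
      (μ := volume) (a := a) (b := b) (Metric.ball_mem_nhds (0:ℝ) zero_lt_one)
      (Filter.Eventually.of_forall fun x => (hFc x).aestronglyMeasurable)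
      ((hFc 0).intervalIntegrable a b)
      ((hΦc.comp (continuous_const.prodMk continuous_id)).aestronglyMeasurable)
      (Filter.Eventually.of_forall fun t ht x hx => by
        refine hC (x, t) ⟨?_, Set.uIoc_subset_uIcc ht⟩
        have hx' : x ∈ Set.Ioo (-1 : ℝ) 1 := by
          simpa [Real.ball_eq_Ioo] using hx
        exact Set.Ioo_subset_Icc_self hx')
      (intervalIntegrable_const)
      (Filter.Eventually.of_forall fun t ht x hx => h_diff t x)
    have hconst : ∀ ε : ℝ, (∫ t in a..b, F ε t) = ∫ t in a..b, L t (y t) (deriv y t) := by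
      intro ε
      have heq : (fun s => g s * (ε * p s)) = fun s => ε * q s := by
        funext s; simp only [hqdef]; ring
      have h2 := hinv y (fun s => ε * p s) hy1 (contDiff_const.mul hp)
      rw [heq] at h2
      rw [← h2]
      apply intervalIntegral.integral_congr
      intro t ht
      have h3 : deriv (fun s => ε * q s) t = ε * deriv q t := deriv_const_mul ε (hqd t)
      show L t (y t + ε * q t) (deriv y t + ε * deriv q t)
        = L t (y t + g t * (ε * p t)) (deriv y t + deriv (fun s => ε * q s) t)
      rw [h3]
      have harg : y t + ε * q t = y t + g t * (ε * p t) := by simp only [hqdef]; ring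
      rw [harg]
    have hzero : (∫ t in a..b, Φ (0, t)) = 0 := by
      have h0 : HasDerivAt (fun x : ℝ => ∫ t in a..b, F x t) 0 0 := by
        have hFconst : (fun x : ℝ => ∫ t in a..b, F x t)
            = fun _ => ∫ t in a..b, L t (y t) (deriv y t) := funext hconst
        rw [hFconst]; exact hasDerivAt_const _ _
      exact hder.2.unique h0
    have hΦ0 : ∀ t, Φ (0, t) = q t * Lu (c t) + deriv q t * Λ t := by
      intro t
      have hγ0 : γ (0, t) = c t := by simp [hγdef, hcdef]
      show fderiv ℝ f (γ (0, t)) (0, q t, deriv q t) = _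
      rw [hγ0, hDlin]
    have hzero' : (∫ t in a..b, (q t * Lu (c t) + deriv q t * Λ t)) = 0 := by
      rw [show (fun t => q t * Lu (c t) + deriv q t * Λ t) = fun t => Φ (0, t) from
        funext fun t => (hΦ0 t).symm]
      exact hzero
    have hd : ∀ s, deriv (fun s => Λ s * q s) s = deriv Λ s * q s + Λ s * deriv q s :=
      fun s => ((hΛd s).hasDerivAt.mul (hqd s).hasDerivAt).deriv
    have hcont2 : Continuous (fun s => deriv Λ s * q s + Λ s * deriv q s) :=
      (hΛ'cont.mul hqc).add (hΛ.continuous.mul hq'c)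
    have hparts : (∫ s in a..b, (deriv Λ s * q s + Λ s * deriv q s)) = 0 := by
      have hint : IntervalIntegrable (deriv (fun s => Λ s * q s)) volume a b := by
        rw [show deriv (fun s => Λ s * q s) = fun s => deriv Λ s * q s + Λ s * deriv q s from
          funext hd]
        exact hcont2.intervalIntegrable a b
      calc (∫ s in a..b, (deriv Λ s * q s + Λ s * deriv q s))
          = ∫ s in a..b, deriv (fun s => Λ s * q s) s :=
            intervalIntegral.integral_congr fun s _ => (hd s).symm
        _ = Λ b * q b - Λ a * q a :=
            intervalIntegral.integral_deriv_eq_sub (fun x _ => (hΛd x).mul (hqd x)) hint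
        _ = 0 := by rw [hqa, hqb]; ring
    have hpt : ∀ t, q t * Lu (c t) + deriv q t * Λ t
        = ρ t * p t + (deriv Λ t * q t + Λ t * deriv q t) := by
      intro t; simp only [hρdef, hqdef]; ring
    have hi1 : IntervalIntegrable (fun t => ρ t * p t) volume a b :=
      (hρcont.mul hp.continuous).intervalIntegrable a b
    have hi2 : IntervalIntegrable (fun t => deriv Λ t * q t + Λ t * deriv q t) volume a b :=
      hcont2.intervalIntegrable a b
    have hsum : (∫ t in a..b, (ρ t * p t + (deriv Λ t * q t + Λ t * deriv q t))) = 0 := by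
      rw [show (fun t => ρ t * p t + (deriv Λ t * q t + Λ t * deriv q t))
          = fun t => q t * Lu (c t) + deriv q t * Λ t from funext fun t => (hpt t).symm]
      exact hzero'
    rw [intervalIntegral.integral_add hi1 hi2, hparts, add_zero] at hsum
    exact hsum

  have hIoo : ∀ t₀ ∈ Set.Ioo a b, ρ t₀ = 0 := by
    intro t₀ ht₀
    by_contra hne
    obtain ⟨δ₁, hδ₁pos, hδ₁⟩ :=
      Metric.continuousAt_iff.mp hρcont.continuousAt (|ρ t₀|) (abs_pos.mpr hne)
    obtain ⟨δ₂, hδ₂pos, hδ₂⟩ := Metric.isOpen_iff.mp isOpen_Ioo t₀ ht₀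
    set δ : ℝ := min δ₁ δ₂ with hδdef
    have hδpos : 0 < δ := lt_min hδ₁pos hδ₂pos
    set χ : ContDiffBump t₀ := ⟨δ / 2, δ, by positivity, by linarith⟩ with hχdef
    set p : ℝ → ℝ := fun x => χ x with hpdef
    have hpc1 : ContDiff ℝ 1 p := χ.contDiff
    have hpc : Continuous p := hpc1.continuous
    have hpa : p a = 0 := by
      apply χ.zero_of_le_dist
      show δ ≤ dist a t₀
      refine le_trans (min_le_right _ _) (le_of_not_gt fun h => ?_)
      exact lt_irrefl a ((hδ₂ (mem_ball.mpr h)).1)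
    have hpb : p b = 0 := by
      apply χ.zero_of_le_dist
      show δ ≤ dist b t₀
      refine le_trans (min_le_right _ _) (le_of_not_gt fun h => ?_)
      exact lt_irrefl b ((hδ₂ (mem_ball.mpr h)).2)
    have h0 : (∫ t in a..b, ρ t * p t) = 0 := hkey p hpc1 hpa hpb
    set w : ℝ → ℝ := fun s => ρ t₀ * (ρ s * p s) with hwdef
    have hwc : Continuous w := continuous_const.mul (hρcont.mul hpc)
    have hw0 : (∫ s in a..b, w s) = 0 := by
      rw [hwdef]
      rw [intervalIntegral.integral_const_mul, h0, mul_zero]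
    have hwnonneg : ∀ s, 0 ≤ w s := by
      intro s
      rcases le_or_gt δ (dist s t₀) with h | h
      · have hps : p s = 0 := χ.zero_of_le_dist h
        simp [hwdef, hps]
      · have h1 : dist s t₀ < δ₁ := lt_of_lt_of_le h (min_le_left _ _)
        have h2 := hδ₁ h1
        rw [Real.dist_eq] at h2
        have hpos : 0 < ρ t₀ * ρ s := by
          rcases abs_lt.mp h2 with ⟨hl, hr⟩
          rcases abs_cases (ρ t₀) with ⟨he, hsign⟩ | ⟨he, hsign⟩ <;> nlinarith
        show (0:ℝ) ≤ ρ t₀ * (ρ s * p s)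
        rw [← mul_assoc]
        exact mul_nonneg hpos.le (χ.nonneg' s)
    have h_ae : ∀ᵐ s ∂(volume.restrict (Set.Ioc a b)), w s = 0 := by
      have := (intervalIntegral.integral_eq_zero_iff_of_le_of_nonneg_ae hab.le
        (Filter.Eventually.of_forall fun s => hwnonneg s)
        (hwc.intervalIntegrable a b)).mp hw0
      filter_upwards [this] with s hs using hs
    have hnull : volume ({s | w s ≠ 0} ∩ Set.Ioc a b) = 0 := by
      have hmeas : MeasurableSet {s : ℝ | w s ≠ 0} :=
        (isOpen_ne_fun hwc continuous_const).measurableSet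
      have := ae_iff.mp h_ae
      rwa [Measure.restrict_apply hmeas] at this
    have hUopen : IsOpen ({s | w s ≠ 0} ∩ Set.Ioo a b) :=
      (isOpen_ne_fun hwc continuous_const).inter isOpen_Ioo
    have hUne : ({s | w s ≠ 0} ∩ Set.Ioo a b).Nonempty := by
      refine ⟨t₀, ?_, ht₀⟩
      have hpt₀ : 0 < p t₀ := χ.pos_of_mem_ball (mem_ball_self χ.rOut_pos)
      have : 0 < w t₀ := by
        show (0:ℝ) < ρ t₀ * (ρ t₀ * p t₀)
        rw [← mul_assoc]
        exact mul_pos (mul_self_pos.mpr hne) hpt₀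
      exact ne_of_gt this
    have hsub : ({s | w s ≠ 0} ∩ Set.Ioo a b) ⊆ ({s | w s ≠ 0} ∩ Set.Ioc a b) :=
      Set.inter_subset_inter_right _ Set.Ioo_subset_Ioc_self
    exact absurd (measure_mono_null hsub hnull)
      (hUopen.measure_pos volume hUne).ne'
  have hIcc : Set.EqOn ρ 0 (Set.Icc a b) := by
    have h1 : Set.EqOn ρ 0 (Set.Ioo a b) := fun s hs => hIoo s hs
    have h2 := h1.closure hρcont continuous_const
    rwa [closure_Ioo hab.ne] at h2
  intro t ht
  have h1 := hLu_eq t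
  have h2 : deriv (fun s => deriv (fun v => L s (y s) v) (deriv y s)) t = deriv Λ t := by
    rw [hΛ_eq]
  rw [h1, h2]
  have := hIcc ht
  simpa [hρdef, hcdef] using this
end

section
/- Classical second Noether theorem (n = 1, r = 1, m = 1, no time transformation): Let L : ℝ × ℝ × ℝ → ℝ be C², and g₀, g₁ : [a,b] → ℝ be C². Suppose that for every C² function y : [a,b] → ℝ and every C² function p : [a,b] → ℝ, the functional ℒ[y] = ∫_a^b L(t, y(t), y'(t)) dt satisfies ℒ[y + g₀·p + g₁·p'] = ℒ[y]. Then for every C³ function y, the identity g₀(t)·E(L)(t) − d/dt( g₁(t)·E(L)(t) ) = 0 holds for all t ∈ [a,b], where E(L)(t) = ∂L/∂u(t,y(t),y'(t)) − d/dt ∂L/∂v(t,y(t),y'(t)). -/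
open intervalIntegral Set Filter Topology

lemma cd_deriv {n : ℕ} {y : ℝ → ℝ} (hy : ContDiff ℝ (n+1 : ℕ) y) : ContDiff ℝ (n : ℕ) (deriv y) := by
  have : ((n+1 : ℕ) : WithTop ℕ∞) = (n : WithTop ℕ∞) + 1 := by push_cast; ring
  rw [this] at hy
  exact (contDiff_succ_iff_deriv.mp hy).2.2

lemma pderiv_u {L : ℝ → ℝ → ℝ → ℝ}
    (hL : ContDiff ℝ 2 (fun p : ℝ × ℝ × ℝ => L p.1 p.2.1 p.2.2)) (s u v : ℝ) :
    HasDerivAt (fun u' => L s u' v)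
      (fderiv ℝ (fun p : ℝ × ℝ × ℝ => L p.1 p.2.1 p.2.2) (s, u, v) (0, 1, 0)) u := by
  have hd : HasFDerivAt (fun p : ℝ × ℝ × ℝ => L p.1 p.2.1 p.2.2)
      (fderiv ℝ (fun p : ℝ × ℝ × ℝ => L p.1 p.2.1 p.2.2) (s, u, v)) (s, u, v) :=
    (hL.differentiable (by norm_num)).differentiableAt.hasFDerivAt
  have he : HasDerivAt (fun u' : ℝ => ((s, u', v) : ℝ × ℝ × ℝ)) ((0:ℝ), (1:ℝ), (0:ℝ)) u :=
    (hasDerivAt_const u s).prodMk ((hasDerivAt_id u).prodMk (hasDerivAt_const u v))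
  exact hd.comp_hasDerivAt u he

lemma pderiv_v {L : ℝ → ℝ → ℝ → ℝ}
    (hL : ContDiff ℝ 2 (fun p : ℝ × ℝ × ℝ => L p.1 p.2.1 p.2.2)) (s u v : ℝ) :
    HasDerivAt (fun v' => L s u v')
      (fderiv ℝ (fun p : ℝ × ℝ × ℝ => L p.1 p.2.1 p.2.2) (s, u, v) (0, 0, 1)) v := by
  have hd : HasFDerivAt (fun p : ℝ × ℝ × ℝ => L p.1 p.2.1 p.2.2)
      (fderiv ℝ (fun p : ℝ × ℝ × ℝ => L p.1 p.2.1 p.2.2) (s, u, v)) (s, u, v) :=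
    (hL.differentiable (by norm_num)).differentiableAt.hasFDerivAt
  have he : HasDerivAt (fun v' : ℝ => ((s, u, v') : ℝ × ℝ × ℝ)) ((0:ℝ), (0:ℝ), (1:ℝ)) v :=
    (hasDerivAt_const v s).prodMk ((hasDerivAt_const v u).prodMk (hasDerivAt_id v))
  exact hd.comp_hasDerivAt v he

lemma contDiff_fderiv_comp {Φ : ℝ × ℝ × ℝ → ℝ} (hΦ : ContDiff ℝ 2 Φ)
    {c : ℝ → ℝ × ℝ × ℝ} (hc : ContDiff ℝ 1 c) (w : ℝ × ℝ × ℝ) :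
    ContDiff ℝ 1 (fun s => fderiv ℝ Φ (c s) w) := by
  have h1 : ContDiff ℝ 1 (fderiv ℝ Φ) := hΦ.fderiv_right (by norm_num)
  exact (ContinuousLinearMap.apply ℝ ℝ w).contDiff.comp (h1.comp hc)

lemma first_variation (a b : ℝ) (Φ : ℝ × ℝ × ℝ → ℝ) (hΦ : ContDiff ℝ 2 Φ)
    (y φ : ℝ → ℝ) (hy : ContDiff ℝ 2 y) (hφ : ContDiff ℝ 1 φ)
    (hconst : ∀ ε : ℝ, (∫ t in a..b, Φ (t, y t + ε * φ t, deriv y t + ε * deriv φ t))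
      = ∫ t in a..b, Φ (t, y t, deriv y t)) :
    (∫ t in a..b, (φ t * fderiv ℝ Φ (t, y t, deriv y t) (0, 1, 0)
        + deriv φ t * fderiv ℝ Φ (t, y t, deriv y t) (0, 0, 1))) = 0 := by
  have hΦd : Differentiable ℝ Φ := hΦ.differentiable (by norm_num)
  have hΦc : Continuous Φ := hΦ.continuous
  have hy' : Continuous (deriv y) := (cd_deriv (n := 1) hy).continuous
  have hφ' : Continuous (deriv φ) := (cd_deriv (n := 0) hφ).continuous
  have hyc : Continuous y := hy.continuous
  have hφc : Continuous φ := hφ.continuous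
  set m : ℝ × ℝ → ℝ × ℝ × ℝ :=
    fun q => (q.1, y q.1 + q.2 * φ q.1, deriv y q.1 + q.2 * deriv φ q.1) with hm
  have hmc : Continuous m := by fun_prop
  have hgd : ∀ t ε : ℝ, HasDerivAt (fun e => Φ (m (t, e)))
      (fderiv ℝ Φ (m (t, ε)) (0, φ t, deriv φ t)) ε := by
    intro t ε
    have he : HasDerivAt (fun e : ℝ => m (t, e)) ((0:ℝ), φ t, deriv φ t) ε := by
      refine (hasDerivAt_const ε t).prodMk (HasDerivAt.prodMk ?_ ?_)
      · simpa using ((hasDerivAt_id ε).mul_const (φ t)).const_add (y t)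
      · simpa using ((hasDerivAt_id ε).mul_const (deriv φ t)).const_add (deriv y t)
    exact (hΦd.differentiableAt.hasFDerivAt).comp_hasDerivAt ε he
  set D : ℝ → ℝ := fun t => φ t * fderiv ℝ Φ (t, y t, deriv y t) (0, 1, 0)
      + deriv φ t * fderiv ℝ Φ (t, y t, deriv y t) (0, 0, 1) with hD
  have hDval : ∀ t, fderiv ℝ Φ (m (t, 0)) (0, φ t, deriv φ t) = D t := by
    intro t
    have h0 : m (t, 0) = (t, y t, deriv y t) := by simp [hm]
    have hvec : ((0:ℝ), φ t, deriv φ t)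
        = φ t • ((0:ℝ), (1:ℝ), (0:ℝ)) + deriv φ t • ((0:ℝ), (0:ℝ), (1:ℝ)) := by
      simp [Prod.ext_iff]
    rw [h0, hD, hvec, map_add, map_smul, map_smul, smul_eq_mul, smul_eq_mul]
  set εs : ℕ → ℝ := fun n => ((n : ℝ) + 1)⁻¹ with hεs
  have hεs_pos : ∀ n, 0 < εs n := fun n => by positivity
  have hεs_le : ∀ n, εs n ≤ 1 := by
    intro n
    rw [hεs]
    have : (1:ℝ) ≤ (n:ℝ) + 1 := le_add_of_nonneg_left (Nat.cast_nonneg n)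
    simpa using inv_le_one_of_one_le₀ this
  have hεs_tendsto : Tendsto εs atTop (𝓝[≠] (0:ℝ)) := by
    apply tendsto_nhdsWithin_of_tendsto_nhds_of_eventually_within
    · simpa [hεs, one_div] using tendsto_one_div_add_atTop_nhds_zero_nat (𝕜 := ℝ)
    · exact Eventually.of_forall fun n => (hεs_pos n).ne'
  set F : ℕ → ℝ → ℝ := fun n t => ((n : ℝ) + 1) * (Φ (m (t, εs n)) - Φ (m (t, 0))) with hF
  have hint : ∀ ε : ℝ, IntervalIntegrable (fun t => Φ (m (t, ε))) MeasureTheory.volume a b := by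
    intro ε
    exact (hΦc.comp (hmc.comp (continuous_id.prodMk continuous_const))).intervalIntegrable a b
  have hFzero : ∀ n, (∫ t in a..b, F n t) = 0 := by
    intro n
    have h1 : (∫ t in a..b, F n t)
        = ((n:ℝ)+1) * ((∫ t in a..b, Φ (m (t, εs n))) - ∫ t in a..b, Φ (m (t, 0))) := by
      rw [← intervalIntegral.integral_sub (hint (εs n)) (hint 0),
        ← intervalIntegral.integral_const_mul]
    have h2 : ∀ ε : ℝ, (∫ t in a..b, Φ (m (t, ε))) = ∫ t in a..b, Φ (t, y t, deriv y t) := by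
      intro ε; exact hconst ε
    rw [h1, h2, h2, sub_self, mul_zero]
  obtain ⟨M₁, hM₁⟩ : ∃ M₁, ∀ x ∈ m '' ((uIcc a b) ×ˢ (Icc (0:ℝ) 1)), ‖fderiv ℝ Φ x‖ ≤ M₁ := by
    have hK : IsCompact (m '' ((uIcc a b) ×ˢ (Icc (0:ℝ) 1))) :=
      (isCompact_uIcc.prod isCompact_Icc).image hmc
    have hcont : ContinuousOn (fderiv ℝ Φ) (m '' ((uIcc a b) ×ˢ (Icc (0:ℝ) 1))) :=
      ((hΦ.fderiv_right (m := 1) (by norm_num)).continuous).continuousOn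
    exact hK.exists_bound_of_continuousOn hcont
  obtain ⟨M₂, hM₂⟩ : ∃ M₂, ∀ t ∈ uIcc a b, ‖((0:ℝ), φ t, deriv φ t)‖ ≤ M₂ := by
    have : ContinuousOn (fun t => (((0:ℝ), φ t, deriv φ t) : ℝ × ℝ × ℝ)) (uIcc a b) :=
      (Continuous.continuousOn (by fun_prop))
    exact isCompact_uIcc.exists_bound_of_continuousOn this
  have hM₁0 : 0 ≤ M₁ := by
    have := hM₁ (m (a, 0)) ⟨(a, 0), ⟨left_mem_uIcc, by simp⟩, rfl⟩
    exact le_trans (norm_nonneg _) this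
  have hM₂0 : 0 ≤ M₂ := le_trans (norm_nonneg _) (hM₂ a left_mem_uIcc)
  have hbound : ∀ n, ∀ t ∈ Set.uIoc a b, ‖F n t‖ ≤ M₁ * M₂ := by
    intro n t ht
    have ht' : t ∈ uIcc a b := uIoc_subset_uIcc ht
    have hders : ∀ ε ∈ Icc (0:ℝ) 1, HasDerivWithinAt (fun e => Φ (m (t, e)))
        (fderiv ℝ Φ (m (t, ε)) (0, φ t, deriv φ t)) (Icc 0 1) ε :=
      fun ε _ => (hgd t ε).hasDerivWithinAt
    have hbnd : ∀ ε ∈ Icc (0:ℝ) 1, ‖fderiv ℝ Φ (m (t, ε)) (0, φ t, deriv φ t)‖ ≤ M₁ * M₂ := by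
      intro ε hε
      calc ‖fderiv ℝ Φ (m (t, ε)) (0, φ t, deriv φ t)‖
          ≤ ‖fderiv ℝ Φ (m (t, ε))‖ * ‖((0:ℝ), φ t, deriv φ t)‖ :=
            ContinuousLinearMap.le_opNorm _ _
        _ ≤ M₁ * M₂ := mul_le_mul (hM₁ _ ⟨(t, ε), ⟨ht', hε⟩, rfl⟩) (hM₂ t ht')
            (norm_nonneg _) hM₁0
    have key := Convex.norm_image_sub_le_of_norm_hasDerivWithin_le hders hbnd
      (convex_Icc 0 1) (⟨le_refl 0, zero_le_one⟩ : (0:ℝ) ∈ Icc (0:ℝ) 1)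
      ⟨(hεs_pos n).le, hεs_le n⟩
    have : ‖Φ (m (t, εs n)) - Φ (m (t, 0))‖ ≤ M₁ * M₂ * ‖εs n - 0‖ := key
    rw [hF]
    have hε' : ‖εs n - 0‖ = ((n:ℝ)+1)⁻¹ := by
      rw [sub_zero, Real.norm_eq_abs, abs_of_pos (hεs_pos n)]
    have hne : ((n:ℝ)+1) ≠ 0 := by positivity
    rw [norm_mul]
    have h1 : ‖((n:ℝ)+1)‖ = (n:ℝ)+1 := by
      rw [Real.norm_eq_abs, abs_of_pos (by positivity)]
    rw [h1]
    calc ((n:ℝ)+1) * ‖Φ (m (t, εs n)) - Φ (m (t, 0))‖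
        ≤ ((n:ℝ)+1) * (M₁ * M₂ * ((n:ℝ)+1)⁻¹) := by
          rw [← hε']
          exact mul_le_mul_of_nonneg_left this (by positivity)
      _ = M₁ * M₂ := by field_simp
  have hconv : ∀ t, Tendsto (fun n => F n t) atTop (𝓝 (D t)) := by
    intro t
    have hd : HasDerivAt (fun e => Φ (m (t, e))) (D t) 0 := by
      have := hgd t 0; rwa [hDval t] at this
    have hslope := hasDerivAt_iff_tendsto_slope.mp hd
    have hcomp := hslope.comp hεs_tendsto
    have heq : (slope (fun e => Φ (m (t, e))) 0 ∘ εs) = fun n => F n t := by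
      funext n
      have hne : ((n:ℝ)+1) ≠ 0 := by positivity
      have hεn : εs n = ((n:ℝ)+1)⁻¹ := rfl
      simp only [Function.comp_apply, slope_def_field, hF, sub_zero]
      rw [hεn, div_eq_mul_inv, inv_inv, mul_comm]
    rwa [heq] at hcomp
  have hDC := intervalIntegral.tendsto_integral_filter_of_dominated_convergence
    (μ := MeasureTheory.volume) (F := F) (f := D) (l := atTop) (fun _ => M₁ * M₂)
    (Eventually.of_forall fun n =>
      (Continuous.aestronglyMeasurable (by fun_prop)))
    (Eventually.of_forall fun n => MeasureTheory.ae_of_all _ (fun t ht => hbound n t ht))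
    (intervalIntegrable_const)
    (MeasureTheory.ae_of_all _ (fun t _ => hconv t))
  have h0 : Tendsto (fun n => ∫ t in a..b, F n t) atTop (𝓝 0) := by
    simp only [hFzero]; exact tendsto_const_nhds
  exact tendsto_nhds_unique hDC h0

theorem classical_second_noether_m1 (a b : ℝ) (hab : a < b)
    (L : ℝ → ℝ → ℝ → ℝ)
    (hL : ContDiff ℝ 2 (fun p : ℝ × ℝ × ℝ => L p.1 p.2.1 p.2.2))
    (g0 g1 : ℝ → ℝ) (hg0 : ContDiff ℝ 2 g0) (hg1 : ContDiff ℝ 2 g1)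
    (hinv : ∀ y p : ℝ → ℝ, ContDiff ℝ 2 y → ContDiff ℝ 2 p →
      ∫ t in a..b, L t (y t + g0 t * p t + g1 t * deriv p t)
          (deriv (fun s => y s + g0 s * p s + g1 s * deriv p s) t) =
        ∫ t in a..b, L t (y t) (deriv y t)) :
    ∀ y : ℝ → ℝ, ContDiff ℝ 3 y → ∀ t ∈ Set.Icc a b,
      g0 t * (deriv (fun u => L t u (deriv y t)) (y t) -
          deriv (fun s => deriv (fun v => L s (y s) v) (deriv y s)) t) -
        deriv (fun s => g1 s * (deriv (fun u => L s u (deriv y s)) (y s) -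
          deriv (fun s' => deriv (fun v => L s' (y s') v) (deriv y s')) s)) t = 0 := by
  intro y hy t ht
  have hab' : a ≤ b := hab.le
  set Φ : ℝ × ℝ × ℝ → ℝ := fun q => L q.1 q.2.1 q.2.2 with hΦdef
  have hΦ : ContDiff ℝ 2 Φ := hL
  have hy2 : ContDiff ℝ 2 y := hy.of_le (by norm_num)
  have hy1d : ContDiff ℝ 2 (deriv y) := cd_deriv (n := 2) hy
  have hcurve : ContDiff ℝ 1 (fun s => ((s, y s, deriv y s) : ℝ × ℝ × ℝ)) :=
    contDiff_id.prodMk ((hy2.of_le (by norm_num)).prodMk (hy1d.of_le (by norm_num)))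
  set Lu : ℝ → ℝ := fun s => fderiv ℝ Φ (s, y s, deriv y s) (0, 1, 0) with hLudef
  set hv : ℝ → ℝ := fun s => fderiv ℝ Φ (s, y s, deriv y s) (0, 0, 1) with hhvdef
  have hLu1 : ContDiff ℝ 1 Lu := contDiff_fderiv_comp hΦ hcurve _
  have hhv1 : ContDiff ℝ 1 hv := contDiff_fderiv_comp hΦ hcurve _
  have hLuc : Continuous Lu := hLu1.continuous
  have hhvc : Continuous hv := hhv1.continuous
  have hhvd : Differentiable ℝ hv := hhv1.differentiable (by norm_num)
  have hhv'c : Continuous (deriv hv) := (cd_deriv (n := 0) hhv1).continuous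
  set E : ℝ → ℝ := fun s => Lu s - deriv hv s with hEdef
  have hEc : Continuous E := hLuc.sub hhv'c
  -- rewrite the goal
  have hLu_eq : ∀ s, deriv (fun u => L s u (deriv y s)) (y s) = Lu s :=
    fun s => (pderiv_u hL s (y s) (deriv y s)).deriv
  have hhv_eq : (fun s => deriv (fun v => L s (y s) v) (deriv y s)) = hv :=
    funext fun s => (pderiv_v hL s (y s) (deriv y s)).deriv
  have hEapp : ∀ s, Lu s - deriv hv s = E s := fun _ => rfl
  simp only [hLu_eq, hhv_eq, hEapp]
  show g0 t * E t - deriv (fun s => g1 s * E s) t = 0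
  have hg0c : Continuous g0 := hg0.continuous
  have hg1c : Continuous g1 := hg1.continuous
  -- the variational identity
  have fact2 : ∀ p : ℝ → ℝ, ContDiff ℝ 2 p →
      (∫ s in a..b, (g0 s * p s + g1 s * deriv p s) * E s)
        = (g0 a * p a + g1 a * deriv p a) * hv a
          - (g0 b * p b + g1 b * deriv p b) * hv b := by
    intro p hp
    set φ : ℝ → ℝ := fun s => g0 s * p s + g1 s * deriv p s with hφdef
    have hp1 : ContDiff ℝ 1 p := hp.of_le (by norm_num)
    have hp'1 : ContDiff ℝ 1 (deriv p) := cd_deriv (n := 1) hp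
    have hφ1 : ContDiff ℝ 1 φ :=
      ((hg0.of_le (by norm_num)).mul hp1).add ((hg1.of_le (by norm_num)).mul hp'1)
    have hφc : Continuous φ := hφ1.continuous
    have hφ'c : Continuous (deriv φ) := (cd_deriv (n := 0) hφ1).continuous
    have hconst : ∀ ε : ℝ, (∫ s in a..b, Φ (s, y s + ε * φ s, deriv y s + ε * deriv φ s))
        = ∫ s in a..b, Φ (s, y s, deriv y s) := by
      intro ε
      have hpε : ContDiff ℝ 2 (fun s => ε * p s) := contDiff_const.mul hp
      have e1 : ∀ s, deriv (fun x => ε * p x) s = ε * deriv p s :=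
        fun s => deriv_const_mul ε (hp.differentiable (by norm_num) s)
      have hinv' := hinv y (fun s => ε * p s) hy2 hpε
      simp only [e1] at hinv'
      have e2 : ∀ s, y s + g0 s * (ε * p s) + g1 s * (ε * deriv p s)
          = y s + ε * φ s := by
        intro s; rw [hφdef]; ring
      simp only [e2] at hinv'
      have e3 : ∀ s, deriv (fun u => y u + ε * φ u) s = deriv y s + ε * deriv φ s := by
        intro s
        exact (((hy2.differentiable (by norm_num) s).hasDerivAt).add
          (((hφ1.differentiable (by norm_num) s).hasDerivAt).const_mul ε)).deriv
      simp only [e3] at hinv'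
      exact hinv'
    have hfv' : (∫ s in a..b, (φ s * Lu s + deriv φ s * hv s)) = 0 :=
      first_variation a b Φ hΦ y φ hy2 hφ1 hconst
    have hparts : (∫ s in a..b, φ s * deriv hv s)
        = φ b * hv b - φ a * hv a - ∫ s in a..b, deriv φ s * hv s :=
      intervalIntegral.integral_mul_deriv_eq_deriv_mul
        (fun x _ => (hφ1.differentiable (by norm_num) x).hasDerivAt)
        (fun x _ => (hhvd x).hasDerivAt)
        (hφ'c.intervalIntegrable a b) (hhv'c.intervalIntegrable a b)
    have int1 : IntervalIntegrable (fun s => φ s * Lu s + deriv φ s * hv s)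
        MeasureTheory.volume a b :=
      ((hφc.mul hLuc).add (hφ'c.mul hhvc)).intervalIntegrable a b
    have int2 : IntervalIntegrable (fun s => φ s * deriv hv s + deriv φ s * hv s)
        MeasureTheory.volume a b :=
      ((hφc.mul hhv'c).add (hφ'c.mul hhvc)).intervalIntegrable a b
    have h6 : (∫ s in a..b, φ s * E s)
        = (∫ s in a..b, (φ s * Lu s + deriv φ s * hv s))
          - (∫ s in a..b, (φ s * deriv hv s + deriv φ s * hv s)) := by
      rw [← intervalIntegral.integral_sub int1 int2]
      apply intervalIntegral.integral_congr
      intro s _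
      simp only [hEdef]
      ring
    have h7 : (∫ s in a..b, (φ s * deriv hv s + deriv φ s * hv s))
        = φ b * hv b - φ a * hv a := by
      rw [intervalIntegral.integral_add ((hφc.fun_mul hhv'c).intervalIntegrable a b)
        ((hφ'c.fun_mul hhvc).intervalIntegrable a b), hparts]
      ring
    have h8 : (∫ s in a..b, φ s * E s) = φ a * hv a - φ b * hv b := by
      rw [h6, hfv', h7]; ring
    exact h8
  -- antiderivatives
  set G : ℝ → ℝ := fun s => ∫ τ in a..s, g0 τ * E τ with hGdef
  have hGder : ∀ s, HasDerivAt G (g0 s * E s) s := fun s =>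
    ((hg0c.mul hEc).integral_hasStrictDerivAt a s).hasDerivAt
  have hGc : Continuous G :=
    Differentiable.continuous (fun s => (hGder s).differentiableAt)
  have hGa : G a = 0 := intervalIntegral.integral_same
  set ψ : ℝ → ℝ := fun s => g1 s * E s - G s with hψdef
  have hψc : Continuous ψ := (hg1c.mul hEc).sub hGc
  set Ψ : ℝ → ℝ := fun s => ∫ τ in a..s, ψ τ with hΨdef
  have hΨder : ∀ s, HasDerivAt Ψ (ψ s) s := fun s =>
    (hψc.integral_hasStrictDerivAt a s).hasDerivAt
  have hΨc : Continuous Ψ :=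
    Differentiable.continuous (fun s => (hΨder s).differentiableAt)
  -- du Bois-Reymond orthogonality
  have fact3 : ∀ r : ℝ → ℝ, Continuous r → (∫ s in a..b, r s) = 0 →
      (∫ s in a..b, s * r s) = 0 → (∫ s in a..b, r s * Ψ s) = 0 := by
    intro r hrc hr0 hr1
    set q : ℝ → ℝ := fun s => ∫ τ in a..s, r τ with hqdef
    have hqder : ∀ s, HasDerivAt q (r s) s := fun s =>
      (hrc.integral_hasStrictDerivAt a s).hasDerivAt
    have hqd : Differentiable ℝ q := fun s => (hqder s).differentiableAt
    have hqc : Continuous q := hqd.continuous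
    set P : ℝ → ℝ := fun s => ∫ τ in a..s, q τ with hPdef
    have hPder : ∀ s, HasDerivAt P (q s) s := fun s =>
      (hqc.integral_hasStrictDerivAt a s).hasDerivAt
    have hPd : Differentiable ℝ P := fun s => (hPder s).differentiableAt
    have hdP : deriv P = q := funext fun s => (hPder s).deriv
    have hdq : deriv q = r := funext fun s => (hqder s).deriv
    have hP2 : ContDiff ℝ 2 P := by
      rw [show (2 : WithTop ℕ∞) = 1 + 1 by norm_num]
      refine contDiff_succ_iff_deriv.mpr ⟨hPd, by simp, ?_⟩
      rw [hdP, show (1 : WithTop ℕ∞) = 0 + 1 by norm_num]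
      refine contDiff_succ_iff_deriv.mpr ⟨hqd, by simp, ?_⟩
      rw [hdq]
      exact contDiff_zero.mpr hrc
    have hqa : q a = 0 := intervalIntegral.integral_same
    have hqb : q b = 0 := hr0
    have hPa : P a = 0 := intervalIntegral.integral_same
    have hPb : P b = 0 := by
      have hid := intervalIntegral.integral_mul_deriv_eq_deriv_mul
        (u := fun s => s) (u' := fun _ => (1:ℝ)) (v := q) (v' := r)
        (fun x _ => hasDerivAt_id x) (fun x _ => hqder x)
        intervalIntegrable_const (hrc.intervalIntegrable a b)
      have h1 : (∫ s in a..b, (1:ℝ) * q s) = ∫ s in a..b, q s := by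
        apply intervalIntegral.integral_congr; intro s _; ring
      rw [hqa, hqb, h1, hr1] at hid
      show (∫ τ in a..b, q τ) = 0
      linarith
    have hkey := fact2 P hP2
    rw [hdP, hPa, hPb, hqa, hqb] at hkey
    simp only [mul_zero, zero_add, add_zero, zero_mul, sub_zero, zero_sub] at hkey
    -- hkey : ∫ (g0 s * P s + g1 s * q s) * E s = 0   (hopefully)
    have hsplit : (∫ s in a..b, (g0 s * P s + g1 s * q s) * E s)
        = (∫ s in a..b, P s * (g0 s * E s)) + ((∫ s in a..b, q s * ψ s)
          + (∫ s in a..b, q s * G s)) := by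
      rw [← intervalIntegral.integral_add ((hqc.fun_mul hψc).intervalIntegrable a b)
        ((hqc.fun_mul hGc).intervalIntegrable a b),
        ← intervalIntegral.integral_add
          ((hPd.continuous.fun_mul (hg0c.fun_mul hEc)).intervalIntegrable a b)
          (((hqc.fun_mul hψc).fun_add (hqc.fun_mul hGc)).intervalIntegrable a b)]
      apply intervalIntegral.integral_congr
      intro s _
      simp only [hψdef]
      ring
    have hpartsPG : (∫ s in a..b, P s * (g0 s * E s))
        = P b * G b - P a * G a - ∫ s in a..b, q s * G s :=
      intervalIntegral.integral_mul_deriv_eq_deriv_mul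
        (fun x _ => hPder x) (fun x _ => hGder x)
        (hqc.intervalIntegrable a b) ((hg0c.mul hEc).intervalIntegrable a b)
    have hpartsqΨ : (∫ s in a..b, q s * ψ s)
        = q b * Ψ b - q a * Ψ a - ∫ s in a..b, r s * Ψ s :=
      intervalIntegral.integral_mul_deriv_eq_deriv_mul
        (fun x _ => hqder x) (fun x _ => hΨder x)
        (hrc.intervalIntegrable a b) (hψc.intervalIntegrable a b)
    rw [hPa, hPb] at hpartsPG
    rw [hqa, hqb] at hpartsqΨ
    rw [hsplit, hpartsPG, hpartsqΨ] at hkey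
    linarith
  -- vanishing lemma for nonneg continuous functions
  have hzero_on : ∀ f : ℝ → ℝ, Continuous f → (∀ s, 0 ≤ f s) → (∫ s in a..b, f s) = 0 →
      ∀ s ∈ Icc a b, f s = 0 := by
    intro f hfc hf0 hfint
    have hIoo : ∀ s ∈ Ioo a b, f s = 0 := by
      intro s hs
      by_contra hne
      have hfs : 0 < f s := lt_of_le_of_ne (hf0 s) (Ne.symm hne)
      have hev : {x | f s / 2 < f x} ∩ Ioo a b ∈ 𝓝 s := by
        refine Filter.inter_mem ?_ (isOpen_Ioo.mem_nhds hs)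
        exact (hfc.tendsto s).eventually (lt_mem_nhds (by linarith : f s / 2 < f s))
      obtain ⟨l, u, hslu, hsub⟩ := mem_nhds_iff_exists_Ioo_subset.mp hev
      have hlu : l < u := hslu.1.trans hslu.2
      have hsub2 : Ioo l u ⊆ Ioo a b := fun x hx => (hsub hx).2
      have hal : a ≤ l ∧ u ≤ b := (Ioo_subset_Ioo_iff hlu).mp hsub2
      have hpos : 0 < ∫ x in l..u, f x :=
        intervalIntegral_pos_of_pos_on (hfc.intervalIntegrable l u)
          (fun x hx => lt_trans (by linarith) ((hsub hx).1)) hlu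
      have h1 : (∫ x in a..l, f x) + (∫ x in l..u, f x) = ∫ x in a..u, f x :=
        intervalIntegral.integral_add_adjacent_intervals
          (hfc.intervalIntegrable a l) (hfc.intervalIntegrable l u)
      have h2 : (∫ x in a..u, f x) + (∫ x in u..b, f x) = ∫ x in a..b, f x :=
        intervalIntegral.integral_add_adjacent_intervals
          (hfc.intervalIntegrable a u) (hfc.intervalIntegrable u b)
      have h3 : 0 ≤ ∫ x in a..l, f x :=
        intervalIntegral.integral_nonneg hal.1 (fun x _ => hf0 x)
      have h4 : 0 ≤ ∫ x in u..b, f x :=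
        intervalIntegral.integral_nonneg hal.2 (fun x _ => hf0 x)
      linarith
    have hcl : EqOn f (fun _ => (0:ℝ)) (closure (Ioo a b)) :=
      Set.EqOn.closure (fun s hs => hIoo s hs) hfc continuous_const
    rw [closure_Ioo hab.ne] at hcl
    exact fun s hs => hcl hs
  -- affine approximation of Ψ
  set mm : ℝ := (a+b)/2 with hmmdef
  have hd : (0:ℝ) < b - a := sub_pos.mpr hab
  have hIm : (∫ s in a..b, (s - mm)) = 0 := by
    rw [intervalIntegral.integral_sub intervalIntegrable_id intervalIntegrable_const,
      integral_id, intervalIntegral.integral_const]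
    rw [hmmdef]; simp only [smul_eq_mul]; ring
  have hIm2 : (∫ s in a..b, (s - mm)^2) = (b-a)^3/12 := by
    have h1 : (∫ s in a..b, (s - mm)^2) = ∫ s in (a-mm)..(b-mm), s^2 := by
      rw [← intervalIntegral.integral_comp_sub_right (fun x => x^2) mm]
    rw [h1, integral_pow]
    rw [hmmdef]; push_cast; ring
  have h12 : ((b-a)^3/12 : ℝ) ≠ 0 := by positivity
  set A : ℝ := (∫ s in a..b, (s - mm) * Ψ s) / ((b-a)^3/12) with hAdef
  set B : ℝ := (∫ s in a..b, Ψ s) / (b-a) with hBdef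
  set r₀ : ℝ → ℝ := fun s => Ψ s - (A*(s-mm) + B) with hr₀def
  have hsmc : Continuous (fun s : ℝ => s - mm) := continuous_id.sub continuous_const
  have hr₀c : Continuous r₀ :=
    hΨc.sub ((continuous_const.mul hsmc).add continuous_const)
  have haff_int : (∫ s in a..b, (A*(s-mm) + B)) = B*(b-a) := by
    rw [intervalIntegral.integral_add ((continuous_const.fun_mul hsmc).intervalIntegrable a b)
      intervalIntegrable_const, intervalIntegral.integral_const_mul, hIm,
      intervalIntegral.integral_const]
    simp only [smul_eq_mul]; ring
  have hIr₀ : (∫ s in a..b, r₀ s) = 0 := by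
    have h1 : (∫ s in a..b, r₀ s)
        = (∫ s in a..b, Ψ s) - ∫ s in a..b, (A*(s-mm) + B) :=
      intervalIntegral.integral_sub (hΨc.intervalIntegrable a b)
        (((continuous_const.mul hsmc).add continuous_const).intervalIntegrable a b)
    rw [h1, haff_int, hBdef]
    field_simp
    ring
  have hImr₀ : (∫ s in a..b, (s-mm) * r₀ s) = 0 := by
    have h1 : (∫ s in a..b, (s-mm) * r₀ s)
        = (∫ s in a..b, (s-mm) * Ψ s)
          - ((∫ s in a..b, A*(s-mm)^2) + (∫ s in a..b, B*(s-mm))) := by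
      rw [← intervalIntegral.integral_add
          ((continuous_const.fun_mul (hsmc.fun_pow 2)).intervalIntegrable a b)
          ((continuous_const.fun_mul hsmc).intervalIntegrable a b),
        ← intervalIntegral.integral_sub ((hsmc.fun_mul hΨc).intervalIntegrable a b)
          (((continuous_const.fun_mul (hsmc.fun_pow 2)).fun_add ((continuous_const.fun_mul hsmc))).intervalIntegrable a b)]
      apply intervalIntegral.integral_congr
      intro s _
      simp only [hr₀def]
      ring
    rw [h1, intervalIntegral.integral_const_mul, intervalIntegral.integral_const_mul,
      hIm, hIm2, hAdef]
    field_simp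
    ring
  have hIsr₀ : (∫ s in a..b, s * r₀ s) = 0 := by
    have h1 : (∫ s in a..b, s * r₀ s)
        = (∫ s in a..b, (s-mm) * r₀ s) + (∫ s in a..b, mm * r₀ s) := by
      rw [← intervalIntegral.integral_add ((hsmc.fun_mul hr₀c).intervalIntegrable a b)
        ((continuous_const.fun_mul hr₀c).intervalIntegrable a b)]
      apply intervalIntegral.integral_congr
      intro s _
      ring
    rw [h1, hImr₀, intervalIntegral.integral_const_mul, hIr₀]
    ring
  have hr₀Ψ : (∫ s in a..b, r₀ s * Ψ s) = 0 := fact3 r₀ hr₀c hIr₀ hIsr₀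
  have hr₀sq : (∫ s in a..b, r₀ s * r₀ s) = 0 := by
    have h1 : (∫ s in a..b, r₀ s * r₀ s)
        = (∫ s in a..b, r₀ s * Ψ s)
          - ((∫ s in a..b, A*((s-mm) * r₀ s)) + (∫ s in a..b, B * r₀ s)) := by
      rw [← intervalIntegral.integral_add
          ((continuous_const.fun_mul (hsmc.fun_mul hr₀c)).intervalIntegrable a b)
          ((continuous_const.fun_mul hr₀c).intervalIntegrable a b),
        ← intervalIntegral.integral_sub ((hr₀c.fun_mul hΨc).intervalIntegrable a b)
          (((continuous_const.fun_mul (hsmc.fun_mul hr₀c)).fun_add (continuous_const.fun_mul hr₀c)).intervalIntegrable a b)]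
      apply intervalIntegral.integral_congr
      intro s _
      simp only [hr₀def]
      ring
    rw [h1, hr₀Ψ, intervalIntegral.integral_const_mul, hImr₀,
      intervalIntegral.integral_const_mul, hIr₀]
    ring
  have hr₀zero : ∀ s ∈ Icc a b, r₀ s = 0 := by
    intro s hs
    have := hzero_on (fun s => r₀ s * r₀ s) (hr₀c.mul hr₀c)
      (fun s => mul_self_nonneg _) hr₀sq s hs
    exact mul_self_eq_zero.mp this
  have hΨaff : ∀ s ∈ Icc a b, Ψ s = A*(s-mm) + B := by
    intro s hs
    have := hr₀zero s hs
    rw [hr₀def] at this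
    linarith [sub_eq_zero.mp this]
  -- ψ is constant A on [a,b]
  have hψA : ∀ s ∈ Icc a b, ψ s = A := by
    have hIoo : ∀ s ∈ Ioo a b, ψ s = A := by
      intro s hs
      have hev : Ψ =ᶠ[𝓝 s] (fun x => A*(x-mm)+B) :=
        Filter.eventuallyEq_of_mem (isOpen_Ioo.mem_nhds hs)
          (fun x hx => hΨaff x (Ioo_subset_Icc_self hx))
      have h1 : HasDerivAt (fun x => A*(x-mm)+B) (ψ s) s :=
        (hΨder s).congr_of_eventuallyEq hev.symm
      have h2 : HasDerivAt (fun x => A*(x-mm)+B) A s := by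
        have := (((hasDerivAt_id s).sub_const mm).const_mul A).add_const B
        simpa using this
      exact h1.unique h2
    have hcl : EqOn ψ (fun _ => A) (closure (Ioo a b)) :=
      Set.EqOn.closure (fun s hs => hIoo s hs) hψc continuous_const
    rw [closure_Ioo hab.ne] at hcl
    exact fun s hs => hcl hs
  have hWeq : ∀ s ∈ Icc a b, g1 s * E s = G s + A := by
    intro s hs
    have h : g1 s * E s - G s = A := hψA s hs
    linarith
  -- boundary identity for arbitrary test functions
  have fact7 : ∀ p : ℝ → ℝ, ContDiff ℝ 2 p →
      p b * G b + A * (p b - p a)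
        = (g0 a * p a + g1 a * deriv p a) * hv a
          - (g0 b * p b + g1 b * deriv p b) * hv b := by
    intro p hp
    have hp1 : ContDiff ℝ 1 p := hp.of_le (by norm_num)
    have hpc : Continuous p := hp1.continuous
    have hp'c : Continuous (deriv p) := (cd_deriv (n := 1) hp).continuous
    have hkey := fact2 p hp
    have hsplit : (∫ s in a..b, (g0 s * p s + g1 s * deriv p s) * E s)
        = (∫ s in a..b, p s * (g0 s * E s)) + ((∫ s in a..b, deriv p s * ψ s)
          + (∫ s in a..b, deriv p s * G s)) := by
      rw [← intervalIntegral.integral_add ((hp'c.fun_mul hψc).intervalIntegrable a b)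
          ((hp'c.fun_mul hGc).intervalIntegrable a b),
        ← intervalIntegral.integral_add
          ((hpc.fun_mul (hg0c.fun_mul hEc)).intervalIntegrable a b)
          (((hp'c.fun_mul hψc).fun_add (hp'c.fun_mul hGc)).intervalIntegrable a b)]
      apply intervalIntegral.integral_congr
      intro s _
      simp only [hψdef]
      ring
    have hparts1 : (∫ s in a..b, p s * (g0 s * E s))
        = p b * G b - p a * G a - ∫ s in a..b, deriv p s * G s :=
      intervalIntegral.integral_mul_deriv_eq_deriv_mul
        (fun x _ => (hp1.differentiable (by norm_num) x).hasDerivAt) (fun x _ => hGder x)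
        (hp'c.intervalIntegrable a b) ((hg0c.mul hEc).intervalIntegrable a b)
    have hψconst : (∫ s in a..b, deriv p s * ψ s) = A * (p b - p a) := by
      have h1 : (∫ s in a..b, deriv p s * ψ s) = ∫ s in a..b, deriv p s * A := by
        apply intervalIntegral.integral_congr
        intro s hs
        show deriv p s * ψ s = deriv p s * A
        rw [hψA s (by rwa [uIcc_of_le hab'] at hs)]
      rw [h1, intervalIntegral.integral_mul_const,
        intervalIntegral.integral_deriv_eq_sub
          (fun x _ => hp1.differentiable (by norm_num) x) (hp'c.intervalIntegrable a b)]
      ring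
    rw [hsplit, hparts1, hψconst, hGa] at hkey
    linarith
  -- concrete polynomial test functions
  have hderpow : ∀ (c : ℝ) (n : ℕ) (x : ℝ),
      deriv (fun s : ℝ => (s - c)^n) x = n * (x - c)^(n-1) := by
    intro c n x
    have h := (((hasDerivAt_id x).sub_const c).pow n)
    simpa using h.deriv
  have hcdpow : ∀ (c : ℝ) (n : ℕ), ContDiff ℝ 2 (fun s : ℝ => (s - c)^n) :=
    fun c n => (contDiff_id.sub contDiff_const).pow n
  have hba : a - b ≠ 0 := sub_ne_zero.mpr hab.ne
  have hba' : b - a ≠ 0 := sub_ne_zero.mpr hab.ne'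
  -- key endpoint vanishing results
  have hEa : g1 a ≠ 0 → (E a = 0 ∧ A = 0) := by
    intro hg1a
    have h2 := fact7 (fun s => (s-b)^2) (hcdpow b 2)
    have h3 := fact7 (fun s => (s-b)^3) (hcdpow b 3)
    simp only [hderpow] at h2 h3
    norm_num at h2 h3
    -- h2 : A * (0 - (a-b)^2) = (g0 a * (a-b)^2 + g1 a * (2*(a-b))) * hv a
    have hva : hv a = 0 := by
      have hc : g1 a * (a-b)^2 * hv a = 0 := by nlinarith [h2, h3, sq_nonneg (a-b)]
      have := mul_ne_zero hg1a (pow_ne_zero 2 hba)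
      rcases mul_eq_zero.mp hc with h | h
      · exact absurd h this
      · exact h
    have hA : A = 0 := by
      rw [hva] at h2
      have h2' : A * (a-b)^2 = 0 := by linarith
      rcases mul_eq_zero.mp h2' with h | h
      · exact h
      · exact absurd h (pow_ne_zero 2 hba)
    refine ⟨?_, hA⟩
    have hψa : g1 a * E a - G a = A := hψA a ⟨le_refl a, hab'⟩
    rw [hGa, hA] at hψa
    have hg1Ea : g1 a * E a = 0 := by linarith
    rcases mul_eq_zero.mp hg1Ea with h | h
    · exact absurd h hg1a
    · exact h
  have hEb : g1 b ≠ 0 → E b = 0 := by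
    intro hg1b
    have h2 := fact7 (fun s => (s-a)^2) (hcdpow a 2)
    have h3 := fact7 (fun s => (s-a)^3) (hcdpow a 3)
    simp only [hderpow] at h2 h3
    norm_num at h2 h3
    have hvb : hv b = 0 := by
      have hc : g1 b * (b-a)^2 * hv b = 0 := by linear_combination h3 - (b-a) * h2
      rcases mul_eq_zero.mp hc with h | h
      · exact absurd h (mul_ne_zero hg1b (pow_ne_zero 2 hba'))
      · exact h
    have hGbA : G b + A = 0 := by
      rw [hvb] at h2
      have h2' : (G b + A) * (b-a)^2 = 0 := by linear_combination h2
      rcases mul_eq_zero.mp h2' with h | h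
      · exact h
      · exact absurd h (pow_ne_zero 2 hba')
    have hψb : g1 b * E b - G b = A := hψA b ⟨hab', le_refl b⟩
    have hg1Eb : g1 b * E b = 0 := by linarith
    rcases mul_eq_zero.mp hg1Eb with h | h
    · exact absurd h hg1b
    · exact h
  -- slope-based differentiability when g1 vanishes at a point
  have hslope_diff : ∀ c : ℝ, g1 c = 0 →
      HasDerivAt (fun s => g1 s * E s) (deriv g1 c * E c) c := by
    intro c hg1c
    have hg1d : HasDerivAt g1 (deriv g1 c) c :=
      ((hg1.differentiable (by norm_num)) c).hasDerivAt
    have hslope := hasDerivAt_iff_tendsto_slope.mp hg1d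
    have hE : Tendsto E (𝓝[≠] c) (𝓝 (E c)) :=
      (hEc.tendsto c).mono_left nhdsWithin_le_nhds
    have hmul := hslope.mul hE
    have heq : ∀ s, slope g1 c s * E s = slope (fun s => g1 s * E s) c s := by
      intro s
      rw [slope_def_field, slope_def_field, hg1c]
      ring
    rw [hasDerivAt_iff_tendsto_slope]
    exact Filter.Tendsto.congr heq hmul
  -- final case analysis
  rcases eq_or_lt_of_le ht.1 with hta | hta
  · -- t = a
    subst hta
    have hW_right : HasDerivWithinAt (fun s => g1 s * E s) (g0 a * E a) (Ici a) a := by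
      have haff : HasDerivWithinAt (fun s => G s + A) (g0 a * E a) (Ici a) a :=
        ((hGder a).add_const A).hasDerivWithinAt
      have hmem : Icc a b ∈ 𝓝[Ici a] a := by
        rw [← Ici_inter_Iic]
        exact Filter.inter_mem self_mem_nhdsWithin
          (nhdsWithin_le_nhds (Iic_mem_nhds hab))
      refine haff.congr_of_eventuallyEq ?_ ?_
      · exact Filter.eventuallyEq_of_mem hmem (fun s hs => hWeq s hs)
      · exact hWeq a ⟨le_refl a, hab'⟩
    by_cases hdiff : DifferentiableAt ℝ (fun s => g1 s * E s) a
    · have h1 : HasDerivWithinAt (fun s => g1 s * E s)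
          (deriv (fun s => g1 s * E s) a) (Ici a) a :=
        hdiff.hasDerivAt.hasDerivWithinAt
      rw [(uniqueDiffOn_Ici a a self_mem_Ici).eq_deriv _ h1 hW_right]
      ring
    · rw [deriv_zero_of_not_differentiableAt hdiff]
      by_cases hg1a : g1 a = 0
      · exact absurd (hslope_diff a hg1a).differentiableAt hdiff
      · obtain ⟨hEa0, -⟩ := hEa hg1a
        rw [hEa0]
        ring
  · rcases eq_or_lt_of_le ht.2 with htb | htb
    · -- t = b
      subst htb
      have hW_left : HasDerivWithinAt (fun s => g1 s * E s) (g0 t * E t) (Iic t) t := by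
        have haff : HasDerivWithinAt (fun s => G s + A) (g0 t * E t) (Iic t) t :=
          ((hGder t).add_const A).hasDerivWithinAt
        have hmem : Icc a t ∈ 𝓝[Iic t] t := by
          rw [← Ici_inter_Iic]
          exact Filter.inter_mem (nhdsWithin_le_nhds (Ici_mem_nhds hab))
            self_mem_nhdsWithin
        refine haff.congr_of_eventuallyEq ?_ ?_
        · exact Filter.eventuallyEq_of_mem hmem (fun s hs => hWeq s hs)
        · exact hWeq t ⟨hab', le_refl t⟩
      by_cases hdiff : DifferentiableAt ℝ (fun s => g1 s * E s) t
      · have h1 : HasDerivWithinAt (fun s => g1 s * E s)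
            (deriv (fun s => g1 s * E s) t) (Iic t) t :=
          hdiff.hasDerivAt.hasDerivWithinAt
        rw [(uniqueDiffOn_Iic t t self_mem_Iic).eq_deriv _ h1 hW_left]
        ring
      · rw [deriv_zero_of_not_differentiableAt hdiff]
        by_cases hg1b : g1 t = 0
        · exact absurd (hslope_diff t hg1b).differentiableAt hdiff
        · rw [hEb hg1b]
          ring
    · -- interior
      have hev : (fun s => g1 s * E s) =ᶠ[𝓝 t] (fun s => G s + A) :=
        Filter.eventuallyEq_of_mem (isOpen_Ioo.mem_nhds ⟨hta, htb⟩)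
          (fun s hs => hWeq s (Ioo_subset_Icc_self hs))
      rw [hev.deriv_eq, ((hGder t).add_const A).deriv]
      ring
end

section
/- Second Noether theorem for the difference calculus (n = 1, r = 1, m = 0): Let a < b be integers with b − a ≥ 2, L : ℤ × ℝ × ℝ → ℝ with L(t,·,·) C¹ for each t, and g : ℤ → ℝ. Suppose that for all y, p : ℤ → ℝ, ∑_{t=a}^{b-1} L(t, y(t+1) + g(t+1)p(t+1), Δ(y + g·p)(t)) = ∑_{t=a}^{b-1} L(t, y(t+1), Δy(t)). Then for every y : ℤ → ℝ, g(t+1)·( ∂L/∂u(t, y(t+1), Δy(t)) − Δ[∂L/∂v(·, y(·+1), Δy(·))](t) ) = 0 for all integers t with a ≤ t ≤ b − 2. -/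
private lemma partial_fst {f : ℝ × ℝ → ℝ} (hf : ContDiff ℝ 1 f) (x v : ℝ) :
    HasDerivAt (fun u => f (u, v)) (fderiv ℝ f (x, v) (1, 0)) x := by
  have hd : HasFDerivAt f (fderiv ℝ f (x, v)) (x, v) :=
    (hf.differentiable one_ne_zero (x, v)).hasFDerivAt
  have h : HasDerivAt (fun u : ℝ => (u, v)) ((1 : ℝ), (0 : ℝ)) x :=
    (hasDerivAt_id x).prodMk (hasDerivAt_const x v)
  exact hd.comp_hasDerivAt x h

private lemma partial_snd {f : ℝ × ℝ → ℝ} (hf : ContDiff ℝ 1 f) (u x : ℝ) :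
    HasDerivAt (fun v => f (u, v)) (fderiv ℝ f (u, x) (0, 1)) x := by
  have hd : HasFDerivAt f (fderiv ℝ f (u, x)) (u, x) :=
    (hf.differentiable one_ne_zero (u, x)).hasFDerivAt
  have h : HasDerivAt (fun v : ℝ => (u, v)) ((0 : ℝ), (1 : ℝ)) x :=
    (hasDerivAt_const x u).prodMk (hasDerivAt_id x)
  exact hd.comp_hasDerivAt x h

theorem discrete_second_noether_m0 (a b : ℤ) (hab : a + 2 ≤ b)
    (L : ℤ → ℝ → ℝ → ℝ)
    (hL : ∀ t : ℤ, ContDiff ℝ 1 (fun p : ℝ × ℝ => L t p.1 p.2))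
    (g : ℤ → ℝ)
    (hinv : ∀ y p : ℤ → ℝ,
      ∑ t ∈ Finset.Ico a b, L t (y (t + 1) + g (t + 1) * p (t + 1))
          ((y (t + 1) + g (t + 1) * p (t + 1)) - (y t + g t * p t)) =
        ∑ t ∈ Finset.Ico a b, L t (y (t + 1)) (y (t + 1) - y t)) :
    ∀ y : ℤ → ℝ, ∀ t : ℤ, a ≤ t → t ≤ b - 2 →
      g (t + 1) * (deriv (fun u => L t u (y (t + 1) - y t)) (y (t + 1)) -
        (deriv (fun v => L (t + 1) (y (t + 2)) v) (y (t + 2) - y (t + 1)) -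
          deriv (fun v => L t (y (t + 1)) v) (y (t + 1) - y t))) = 0 := by
  intro y t hta htb
  set c : ℝ := g (t + 1) with hc
  -- the two terms of the action that depend on the variation at t+1
  set G : ℝ → ℝ := fun ε =>
    L t (y (t + 1) + c * ε) (y (t + 1) + c * ε - y t) +
      L (t + 1) (y (t + 2)) (y (t + 2) - (y (t + 1) + c * ε)) with hG
  have htmem : t ∈ Finset.Ico a b := Finset.mem_Ico.2 ⟨hta, by omega⟩
  have ht1mem : t + 1 ∈ (Finset.Ico a b).erase t := by
    refine Finset.mem_erase.2 ⟨by omega, Finset.mem_Ico.2 ⟨by omega, by omega⟩⟩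
  have hGconst : ∀ ε : ℝ, G ε = G 0 := by
    intro ε
    have h1 := hinv y (fun s => if s = t + 1 then ε else 0)
    have h0 := hinv y (fun s => if s = t + 1 then (0 : ℝ) else 0)
    -- split off indices t and t+1 from both sums
    have split : ∀ δ : ℝ,
        ∑ s ∈ Finset.Ico a b,
          L s (y (s + 1) + g (s + 1) * (if s + 1 = t + 1 then δ else 0))
            ((y (s + 1) + g (s + 1) * (if s + 1 = t + 1 then δ else 0)) -
              (y s + g s * (if s = t + 1 then δ else 0))) =
        G δ + ∑ s ∈ ((Finset.Ico a b).erase t).erase (t + 1),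
          L s (y (s + 1)) (y (s + 1) - y s) := by
      intro δ
      rw [← Finset.add_sum_erase _ _ htmem, ← Finset.add_sum_erase _ _ ht1mem]
      have e2 : t + 1 + 1 = t + 2 := by ring
      have hrest : ∀ s ∈ ((Finset.Ico a b).erase t).erase (t + 1),
          L s (y (s + 1) + g (s + 1) * (if s + 1 = t + 1 then δ else 0))
            ((y (s + 1) + g (s + 1) * (if s + 1 = t + 1 then δ else 0)) -
              (y s + g s * (if s = t + 1 then δ else 0))) =
          L s (y (s + 1)) (y (s + 1) - y s) := by
        intro s hs
        have hs1 : s ≠ t + 1 := (Finset.mem_erase.1 hs).1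
        have hs2 : s ≠ t := (Finset.mem_erase.1 (Finset.mem_erase.1 hs).2).1
        have : s + 1 ≠ t + 1 := by omega
        simp [this, hs1]
      rw [Finset.sum_congr rfl hrest]
      have h2 : t ≠ t + 1 := by omega
      simp only [hG, e2]
      have h4 : (if t + 1 = t + 1 then δ else 0) = δ := if_pos rfl
      have h5 : (if t = t + 1 then δ else 0) = (0 : ℝ) := if_neg h2
      have h6 : (if t + 2 = t + 1 then δ else 0) = (0 : ℝ) := if_neg (by omega)
      simp only [if_true, h5, h6, mul_zero, add_zero, hc]
      ring
    have hrhs : ∑ s ∈ Finset.Ico a b, L s (y (s + 1)) (y (s + 1) - y s) =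
        G 0 + ∑ s ∈ ((Finset.Ico a b).erase t).erase (t + 1),
          L s (y (s + 1)) (y (s + 1) - y s) := by
      have h := split 0
      simp only [ite_self, mul_zero, add_zero] at h
      exact h
    have h1' := split ε
    rw [h1', hrhs] at h1
    linarith
  -- derivative computation
  set f0 : ℝ × ℝ → ℝ := fun p => L t p.1 p.2 with hf0
  set f1 : ℝ × ℝ → ℝ := fun p => L (t + 1) p.1 p.2 with hf1
  set x1 : ℝ := y (t + 1)
  set x0 : ℝ := y t
  set x2 : ℝ := y (t + 2)
  set D0 := fderiv ℝ f0 (x1, x1 - x0) with hD0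
  set D1 := fderiv ℝ f1 (x2, x2 - x1) with hD1
  -- first term of G
  have hcurve1 : HasDerivAt (fun ε : ℝ => ((x1 + c * ε, x1 + c * ε - x0) : ℝ × ℝ))
      ((c, c) : ℝ × ℝ) 0 := by
    have hl : HasDerivAt (fun ε : ℝ => x1 + c * ε) c 0 := by
      simpa using ((hasDerivAt_id (0 : ℝ)).const_mul c).const_add x1
    exact hl.prodMk (hl.sub_const x0)
  have hT1 : HasDerivAt (fun ε : ℝ => L t (x1 + c * ε) (x1 + c * ε - x0)) (D0 (c, c)) 0 := by
    have hd : HasFDerivAt f0 D0 (x1 + c * 0, x1 + c * 0 - x0) := by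
      have : (x1 + c * 0, x1 + c * 0 - x0) = ((x1, x1 - x0) : ℝ × ℝ) := by
        simp
      rw [this]
      exact ((hL t).differentiable one_ne_zero (x1, x1 - x0)).hasFDerivAt
    have := hd.comp_hasDerivAt 0 hcurve1
    simpa [Function.comp_def, hf0] using this
  -- second term of G
  have hcurve2 : HasDerivAt (fun ε : ℝ => ((x2, x2 - (x1 + c * ε)) : ℝ × ℝ))
      ((0, -c) : ℝ × ℝ) 0 := by
    have hl : HasDerivAt (fun ε : ℝ => x2 - (x1 + c * ε)) (-c) 0 := by
      have h1 : HasDerivAt (fun ε : ℝ => x1 + c * ε) c 0 := by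
        simpa using ((hasDerivAt_id (0 : ℝ)).const_mul c).const_add x1
      simpa using h1.const_sub x2
    exact (hasDerivAt_const (0 : ℝ) x2).prodMk hl
  have hT2 : HasDerivAt (fun ε : ℝ => L (t + 1) x2 (x2 - (x1 + c * ε))) (D1 (0, -c)) 0 := by
    have hd : HasFDerivAt f1 D1 (x2, x2 - (x1 + c * 0)) := by
      have : (x2, x2 - (x1 + c * 0)) = ((x2, x2 - x1) : ℝ × ℝ) := by simp
      rw [this]
      exact ((hL (t + 1)).differentiable one_ne_zero (x2, x2 - x1)).hasFDerivAt
    have := hd.comp_hasDerivAt 0 hcurve2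
    simpa [Function.comp_def, hf1] using this
  have hGderiv : HasDerivAt G (D0 (c, c) + D1 (0, -c)) 0 := hT1.add hT2
  have hGzero : HasDerivAt G 0 0 := by
    have : G = fun _ => G 0 := funext hGconst
    rw [this]
    exact hasDerivAt_const 0 (G 0)
  have hkey : D0 (c, c) + D1 (0, -c) = 0 := hGderiv.unique hGzero
  -- identify the partial derivatives in the goal
  have hA : deriv (fun u => L t u (x1 - x0)) x1 = D0 (1, 0) :=
    (partial_fst (hL t) x1 (x1 - x0)).deriv
  have hB : deriv (fun v => L (t + 1) x2 v) (x2 - x1) = D1 (0, 1) :=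
    (partial_snd (hL (t + 1)) x2 (x2 - x1)).deriv
  have hC : deriv (fun v => L t x1 v) (x1 - x0) = D0 (0, 1) :=
    (partial_snd (hL t) x1 (x1 - x0)).deriv
  rw [hA, hB, hC]
  have e0 : D0 (c, c) = c * D0 (1, 0) + c * D0 (0, 1) := by
    have : ((c, c) : ℝ × ℝ) = c • ((1, 0) : ℝ × ℝ) + c • ((0, 1) : ℝ × ℝ) := by
      simp [Prod.ext_iff]
    rw [this, map_add, map_smul, map_smul, smul_eq_mul, smul_eq_mul]
  have e1 : D1 (0, -c) = -(c * D1 (0, 1)) := by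
    have : ((0, -c) : ℝ × ℝ) = (-c) • ((0, 1) : ℝ × ℝ) := by simp [Prod.ext_iff]
    rw [this, map_smul, smul_eq_mul]
    ring
  rw [e0, e1] at hkey
  linarith
end

section
/- Fundamental lemma of the double discrete variational calculus: Let a₁ < b₁ − 1, a₂ < b₂ − 1 be integers and M : ℤ × ℤ → ℝ. If ∑_{x=a₁}^{b₁−1} ∑_{y=a₂}^{b₂−1} M(x,y)·η(x+1, y+1) = 0 for every η : ℤ × ℤ → ℝ vanishing on the boundary of the rectangle [a₁,b₁] × [a₂,b₂] (i.e., η(x,y) = 0 whenever x ∈ {a₁,b₁} or y ∈ {a₂,b₂}), then M(x,y) = 0 for all (x,y) with a₁ ≤ x ≤ b₁ − 2 and a₂ ≤ y ≤ b₂ − 2. -/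
theorem double_discrete_fundamental_lemma (a1 b1 a2 b2 : ℤ)
    (h1 : a1 < b1 - 1) (h2 : a2 < b2 - 1) (M : ℤ → ℤ → ℝ)
    (hyp : ∀ η : ℤ → ℤ → ℝ,
      (∀ x y : ℤ, (x = a1 ∨ x = b1 ∨ y = a2 ∨ y = b2) → η x y = 0) →
      ∑ x ∈ Finset.Ico a1 b1, ∑ y ∈ Finset.Ico a2 b2,
        M x y * η (x + 1) (y + 1) = 0) :
    ∀ x y : ℤ, a1 ≤ x → x ≤ b1 - 2 → a2 ≤ y → y ≤ b2 - 2 → M x y = 0 := by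
  intro x y hx1 hx2 hy1 hy2
  set η : ℤ → ℤ → ℝ := fun u v => if u = x + 1 ∧ v = y + 1 then 1 else 0 with hη
  have hbd : ∀ u v : ℤ, (u = a1 ∨ u = b1 ∨ v = a2 ∨ v = b2) → η u v = 0 := by
    intro u v h
    simp only [hη, ite_eq_right_iff, and_imp]
    rintro rfl rfl
    rcases h with h | h | h | h <;> omega
  have key := hyp η hbd
  rw [Finset.sum_eq_single x] at key
  · rw [Finset.sum_eq_single y] at key
    · simpa [hη] using key
    · intro b _ hb
      simp [hη, hb]
    · intro h
      exact absurd (Finset.mem_Ico.mpr ⟨hy1, by omega⟩) h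
  · intro b _ hb
    have : ∀ v ∈ Finset.Ico a2 b2, M b v * η (b + 1) (v + 1) = 0 := by
      intro v _
      simp [hη, hb]
    exact Finset.sum_eq_zero this
  · intro h
    exact absurd (Finset.mem_Ico.mpr ⟨hx1, by omega⟩) h
end

section
/- Second Noether theorem for the q-calculus (n = 1, r = 1, m = 0): Let q > 1, a = q^k, b = q^K with K ≥ k + 2, L : ℝ × ℝ × ℝ → ℝ with L(t,·,·) C¹, and g : q^{ℕ₀} → ℝ. Suppose that for all y, p : q^{ℕ₀} → ℝ, ∑_{i=k}^{K-1} L(q^i, y(q^{i+1}) + g(q^{i+1})p(q^{i+1}), D_q(y + g·p)(q^i))·(q−1)q^i = ∑_{i=k}^{K-1} L(q^i, y(q^{i+1}), D_q y(q^i))·(q−1)q^i. Then for every y, g(qt)·( ∂L/∂u(t, y(qt), D_q y(t)) − D_q[ s ↦ ∂L/∂v(s, y(qs), D_q y(s)) ](t) ) = 0 for all t = q^i with k ≤ i ≤ K − 2. -/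
/-- q-derivative D_q f(t) = (f(qt) - f(t)) / ((q-1) t). -/
noncomputable def qderiv (q : ℝ) (f : ℝ → ℝ) (t : ℝ) : ℝ := (f (q * t) - f t) / ((q - 1) * t)

lemma hasDerivAt_line (L : ℝ → ℝ → ℝ → ℝ)
    (hL : ∀ t : ℝ, ContDiff ℝ 1 (fun p : ℝ × ℝ => L t p.1 p.2))
    (t a b c e : ℝ) :
    HasDerivAt (fun ε : ℝ => L t (a + c * ε) (b + e * ε))
      (c * deriv (fun u => L t u b) a + e * deriv (fun v => L t a v) b) 0 := by
  have hdiff : Differentiable ℝ (fun p : ℝ × ℝ => L t p.1 p.2) :=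
    (hL t).differentiable one_ne_zero
  have hF : HasFDerivAt (fun p : ℝ × ℝ => L t p.1 p.2)
      (fderiv ℝ (fun p : ℝ × ℝ => L t p.1 p.2) (a, b)) (a, b) :=
    (hdiff (a, b)).hasFDerivAt
  set f := fderiv ℝ (fun p : ℝ × ℝ => L t p.1 p.2) (a, b) with hf
  have h1 : HasDerivAt (fun u => L t u b) (f (1, 0)) a := by
    have hγ : HasDerivAt (fun u : ℝ => (u, b)) ((1 : ℝ), (0 : ℝ)) a :=
      (hasDerivAt_id a).prodMk (hasDerivAt_const a b)
    exact hF.comp_hasDerivAt a hγ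
  have h2 : HasDerivAt (fun v => L t a v) (f (0, 1)) b := by
    have hγ : HasDerivAt (fun v : ℝ => (a, v)) ((0 : ℝ), (1 : ℝ)) b :=
      (hasDerivAt_const b a).prodMk (hasDerivAt_id b)
    exact hF.comp_hasDerivAt b hγ
  have hγ : HasDerivAt (fun ε : ℝ => (a + c * ε, b + e * ε)) ((c : ℝ), (e : ℝ)) 0 := by
    have ha : HasDerivAt (fun ε : ℝ => a + c * ε) c 0 := by
      simpa using ((hasDerivAt_id (0:ℝ)).const_mul c).const_add a
    have hb : HasDerivAt (fun ε : ℝ => b + e * ε) e 0 := by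
      simpa using ((hasDerivAt_id (0:ℝ)).const_mul e).const_add b
    exact ha.prodMk hb
  have hF' : HasFDerivAt (fun p : ℝ × ℝ => L t p.1 p.2) f
      ((fun ε : ℝ => (a + c * ε, b + e * ε)) 0) := by simpa using hF
  have hcomp : HasDerivAt (fun ε : ℝ => L t (a + c * ε) (b + e * ε)) (f (c, e)) 0 :=
    by have := hF'.comp_hasDerivAt 0 hγ; exact this
  have hval : f (c, e) = c * f (1, 0) + e * f (0, 1) := by
    have h : ((c, e) : ℝ × ℝ) = c • ((1:ℝ), (0:ℝ)) + e • ((0:ℝ), (1:ℝ)) := by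
      simp [Prod.ext_iff]
    rw [h, map_add, map_smul, map_smul]; simp [smul_eq_mul]
  rw [h1.deriv, h2.deriv, ← hval]
  exact hcomp

theorem q_second_noether_m0 (q : ℝ) (hq : 1 < q) (k K : ℕ) (hkK : k + 2 ≤ K)
    (L : ℝ → ℝ → ℝ → ℝ)
    (hL : ∀ t : ℝ, ContDiff ℝ 1 (fun p : ℝ × ℝ => L t p.1 p.2))
    (g : ℝ → ℝ)
    (hinv : ∀ y p : ℝ → ℝ,
      ∑ i ∈ Finset.Ico k K,
          L (q ^ i) (y (q ^ (i + 1)) + g (q ^ (i + 1)) * p (q ^ (i + 1)))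
            (qderiv q (fun s => y s + g s * p s) (q ^ i)) * ((q - 1) * q ^ i) =
        ∑ i ∈ Finset.Ico k K,
          L (q ^ i) (y (q ^ (i + 1))) (qderiv q y (q ^ i)) * ((q - 1) * q ^ i)) :
    ∀ y : ℝ → ℝ, ∀ i : ℕ, k ≤ i → i ≤ K - 2 →
      g (q * q ^ i) *
        (deriv (fun u => L (q ^ i) u (qderiv q y (q ^ i))) (y (q * q ^ i)) -
          qderiv q
            (fun s => deriv (fun v => L s (y (q * s)) v) (qderiv q y s)) (q ^ i)) = 0 := by
  intro y i hki hiK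
  have hq0 : (0:ℝ) < q := lt_trans one_pos hq
  have hiK' : i + 2 ≤ K := by omega
  have hqm : q - 1 ≠ 0 := sub_ne_zero.mpr (ne_of_gt hq)
  have hd : ∀ j : ℕ, (q - 1) * q ^ j ≠ 0 := fun j =>
    mul_ne_zero hqm (pow_ne_zero j (ne_of_gt hq0))
  have hsm : StrictMono (fun n : ℕ => (q:ℝ) ^ n) := fun m n h => pow_lt_pow_right₀ hq h
  have hinj : Function.Injective (fun n : ℕ => (q:ℝ) ^ n) := hsm.injective
  have hmul : ∀ j : ℕ, q * q ^ j = q ^ (j + 1) := fun j => (pow_succ' q j).symm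
  have e4 : (q:ℝ) ^ (i + 1 + 1) = q ^ (i + 2) := by norm_num
  set d : ℝ := (q - 1) * q ^ i with hdd
  set d' : ℝ := (q - 1) * q ^ (i + 1) with hdd'
  set c : ℝ := g (q ^ (i + 1)) with hc
  set y0 : ℝ := y (q ^ i) with hy0
  set y1 : ℝ := y (q ^ (i + 1)) with hy1
  set y2 : ℝ := y (q ^ (i + 2)) with hy2
  set A : ℝ := (y1 - y0) / d with hA
  set B : ℝ := (y2 - y1) / d' with hB
  have hdne : d ≠ 0 := by rw [hdd]; exact hd i
  have hdne' : d' ≠ 0 := by rw [hdd']; exact hd (i + 1)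
  -- Step 1: invariance applied to a bump perturbation gives constancy of the two
  -- varying terms.
  have key : ∀ ε : ℝ,
      L (q ^ i) (y1 + c * ε) (A + c / d * ε) * d
        + L (q ^ (i + 1)) (y2 + 0 * ε) (B + -(c / d') * ε) * d'
      = L (q ^ i) (y1 + c * 0) (A + c / d * 0) * d
        + L (q ^ (i + 1)) (y2 + 0 * 0) (B + -(c / d') * 0) * d' := by
    intro ε
    have h := hinv y (fun s => if s = q ^ (i + 1) then ε else 0)
    have hsub : ∑ j ∈ Finset.Ico k K,
        (L (q ^ j) (y (q ^ (j + 1)) + g (q ^ (j + 1)) *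
              (if q ^ (j + 1) = (q:ℝ) ^ (i + 1) then ε else 0))
            (qderiv q (fun s => y s + g s * (if s = (q:ℝ) ^ (i + 1) then ε else 0)) (q ^ j))
              * ((q - 1) * q ^ j)
          - L (q ^ j) (y (q ^ (j + 1))) (qderiv q y (q ^ j)) * ((q - 1) * q ^ j)) = 0 := by
      rw [Finset.sum_sub_distrib, sub_eq_zero]
      exact h
    have hpair : ({i, i + 1} : Finset ℕ) ⊆ Finset.Ico k K := by
      intro j hj
      simp only [Finset.mem_insert, Finset.mem_singleton] at hj
      rcases hj with rfl | rfl <;> simp [Finset.mem_Ico] <;> omega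
    have hzero : ∀ j ∈ Finset.Ico k K, j ∉ ({i, i + 1} : Finset ℕ) →
        (L (q ^ j) (y (q ^ (j + 1)) + g (q ^ (j + 1)) *
              (if q ^ (j + 1) = (q:ℝ) ^ (i + 1) then ε else 0))
            (qderiv q (fun s => y s + g s * (if s = (q:ℝ) ^ (i + 1) then ε else 0)) (q ^ j))
              * ((q - 1) * q ^ j)
          - L (q ^ j) (y (q ^ (j + 1))) (qderiv q y (q ^ j)) * ((q - 1) * q ^ j)) = 0 := by
      intro j _ hj
      simp only [Finset.mem_insert, Finset.mem_singleton, not_or] at hj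
      have h1 : (q:ℝ) ^ (j + 1) ≠ q ^ (i + 1) := fun hh => hj.1 (by
        have := hinj hh; omega)
      have h2 : (q:ℝ) ^ j ≠ q ^ (i + 1) := fun hh => hj.2 (by
        have := hinj hh; omega)
      simp only [qderiv, hmul j, if_neg h1, if_neg h2, mul_zero, add_zero, sub_self]
    have hred := (Finset.sum_subset hpair hzero).trans hsub
    rw [Finset.sum_pair (by omega : i ≠ i + 1)] at hred
    have e2 : (q:ℝ) ^ i ≠ q ^ (i + 1) := fun hh => by have := hinj hh; omega
    have e3 : (q:ℝ) ^ (i + 1 + 1) ≠ q ^ (i + 1) := fun hh => by have := hinj hh; omega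
    simp only [qderiv, hmul i, hmul (i + 1), if_neg e2, if_neg e3, if_pos rfl,
      ite_true, eq_self_iff_true, if_true, mul_zero, add_zero] at hred
    rw [e4] at hred
    rw [← hy0, ← hy1, ← hy2, ← hc, ← hdd, ← hdd'] at hred
    have harg1 : (y1 + c * ε - y0) / d = A + c / d * ε := by
      rw [hA]; field_simp; ring
    have harg2 : (y2 - (y1 + c * ε)) / d' = B + -(c / d') * ε := by
      rw [hB]; field_simp; ring
    simp only [mul_zero, add_zero, zero_mul]
    rw [← harg1, ← harg2, hA, hB]
    linarith [hred]
  -- Step 2: differentiate at ε = 0.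
  have hF :=
    ((hasDerivAt_line L hL (q ^ i) y1 A c (c / d)).mul_const d).add
      ((hasDerivAt_line L hL (q ^ (i + 1)) y2 B 0 (-(c / d'))).mul_const d')
  have hderiv := hF.deriv
  simp only [Pi.add_def] at hderiv
  rw [funext key, deriv_const] at hderiv
  have hD0 : (c * deriv (fun u => L (q ^ i) u A) y1
        + c / d * deriv (fun v => L (q ^ i) y1 v) A) * d
      + (0 * deriv (fun u => L (q ^ (i + 1)) u B) y2
        + -(c / d') * deriv (fun v => L (q ^ (i + 1)) y2 v) B) * d' = 0 := hderiv.symm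
  -- clean up divisions
  have hclean : c * deriv (fun u => L (q ^ i) u A) y1 * d
      + c * deriv (fun v => L (q ^ i) y1 v) A
      - c * deriv (fun v => L (q ^ (i + 1)) y2 v) B = 0 := by
    have h1 : (c * deriv (fun u => L (q ^ i) u A) y1
        + c / d * deriv (fun v => L (q ^ i) y1 v) A) * d
        = c * deriv (fun u => L (q ^ i) u A) y1 * d
          + c * deriv (fun v => L (q ^ i) y1 v) A := by
      field_simp
    have h2 : (0 * deriv (fun u => L (q ^ (i + 1)) u B) y2
        + -(c / d') * deriv (fun v => L (q ^ (i + 1)) y2 v) B) * d'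
        = -(c * deriv (fun v => L (q ^ (i + 1)) y2 v) B) := by
      field_simp
      ring
    rw [h1, h2] at hD0
    linarith [hD0]
  -- Step 3: rewrite the goal and conclude.
  simp only [qderiv, hmul, e4]
  rw [← hy0, ← hy1, ← hy2, ← hc, ← hdd, ← hdd', ← hA, ← hB]
  have hmain : c * (deriv (fun u => L (q ^ i) u A) y1
      - (deriv (fun v => L (q ^ (i + 1)) y2 v) B
          - deriv (fun v => L (q ^ i) y1 v) A) / d) * d
      = c * deriv (fun u => L (q ^ i) u A) y1 * d
        + c * deriv (fun v => L (q ^ i) y1 v) A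
        - c * deriv (fun v => L (q ^ (i + 1)) y2 v) B := by
    field_simp; ring
  have := hmain.trans hclean
  rcases mul_eq_zero.mp this with h | h
  · exact h
  · exact absurd h hdne
end
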